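/- Let X be an infinite Hausdorff topological space, 𝓑 a bornology on X, and let Φ ∈ {Ω, Γ}, where Φ̃↑_𝓑 denotes 𝒟↑_𝓑(USC*(X)) if Φ = Ω and 𝒮↑_𝓑(USC*(X)) if Φ = Γ. Assume that C*(X) is countably dense in ⟨USC*(X), τ_𝓑⟩, i.e., for every f ∈ USC*(X) there is a countable set G of bounded continuous functions with f in the τ_𝓑-closure of G. Then the following are equivalent: (a) ⟨USC*(X), τ_𝓑⟩ satisfies S₁(Φ̃↑_𝓑, 𝒟(USC*(X))); (b) ⟨USC*(X), τ_𝓑⟩ is separable and X satisfies S₁(Φ_𝓑(X), Ω_𝓑(X)); (c) ⟨USC*(X), τ_𝓑⟩ is separable and satisfies S₁(Φ_{0,𝓑}(USC*(X)), Ω_{0,𝓑}(USC*(X))), where 0 is the constant zero function; (d) ⟨USC*(X), τ_𝓑⟩ is separable and satisfies S₁(Φ̃↑_𝓑, Ω_{0,𝓑}(USC*(X))). -/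

import Mathlib

open Set Filter Topology

/-- A bornology in the sense of the paper: a proper ideal of subsets of `X`
(nonempty, downward closed, closed under binary unions, `X ∉ 𝓑`) whose union is `X`. -/
def IsPBornology {X : Type*} (𝓑 : Set (Set X)) : Prop :=
  𝓑.Nonempty ∧ (∀ A B : Set X, A ⊆ B → B ∈ 𝓑 → A ∈ 𝓑) ∧
    (∀ A B : Set X, A ∈ 𝓑 → B ∈ 𝓑 → A ∪ B ∈ 𝓑) ∧
    (Set.univ : Set X) ∉ 𝓑 ∧ ⋃₀ 𝓑 = Set.univ

/-- `USC*(X)`: bounded upper semicontinuous real functions on `X`. -/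
def USCb (X : Type*) [TopologicalSpace X] : Set (X → ℝ) :=
  {f | (∀ a : ℝ, IsOpen {x | f x < a}) ∧ ∃ M : ℝ, ∀ x, |f x| ≤ M}

/-- `C*(X)`: bounded continuous real functions on `X`. -/
def Cb (X : Type*) [TopologicalSpace X] : Set (X → ℝ) :=
  {f | Continuous f ∧ ∃ M : ℝ, ∀ x, |f x| ≤ M}

/-- `C(X)`: continuous real functions on `X`. -/
def ContFns (X : Type*) [TopologicalSpace X] : Set (X → ℝ) := {f | Continuous f}

/-- Basic `τ_𝓑`-neighborhood `N_{B,ε}(h)`. -/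
def Nbhd {X : Type*} (B : Set X) (ε : ℝ) (h : X → ℝ) : Set (X → ℝ) :=
  {f | ∀ x ∈ B, |h x - f x| < ε}

/-- The topology `τ_𝓑` on `ℝ^X` of uniform convergence on members of `𝓑`. -/
def tauB {X : Type*} (𝓑 : Set (Set X)) : TopologicalSpace (X → ℝ) :=
  TopologicalSpace.generateFrom
    {S | ∃ (h : X → ℝ) (B : Set X) (ε : ℝ), B ∈ 𝓑 ∧ 0 < ε ∧ S = Nbhd B ε h}

/-- The ball `𝔹(B,V)` about `B` of radius an entourage `V`. -/
def UBall {X : Type*} (B : Set X) (V : Set (X × X)) : Set X :=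
  {x | ∃ y ∈ B, (x, y) ∈ V}

/-- Basic `τ_𝓑ˢ`-neighborhood `Nˢ_{B,ε}(h)`. -/
def NbhdS {X : Type*} [UniformSpace X] (B : Set X) (ε : ℝ) (h : X → ℝ) : Set (X → ℝ) :=
  {f | ∃ V ∈ uniformity X, ∀ x ∈ UBall B V, |h x - f x| < ε}

/-- The topology `τ_𝓑ˢ` on `ℝ^X`. -/
def tauBs {X : Type*} [UniformSpace X] (𝓑 : Set (Set X)) : TopologicalSpace (X → ℝ) :=
  TopologicalSpace.generateFrom
    {S | ∃ (h : X → ℝ) (B : Set X) (ε : ℝ), B ∈ 𝓑 ∧ 0 < ε ∧ S = NbhdS B ε h}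

/-- The selection principle `S₁(𝒜, ℬ)`. -/
def S1 {α : Type*} (𝒜 ℬ : Set (Set α)) : Prop :=
  ∀ u : ℕ → Set α, (∀ n, u n ∈ 𝒜) → ∃ s : ℕ → α, (∀ n, s n ∈ u n) ∧ Set.range s ∈ ℬ

/-- `𝒰` is an open cover of `X`. -/
def IsOCover {X : Type*} [TopologicalSpace X] (𝒰 : Set (Set X)) : Prop :=
  (∀ U ∈ 𝒰, IsOpen U) ∧ ⋃₀ 𝒰 = Set.univ

/-- `𝒪(X)`: all open covers of `X`. -/
def OCovers (X : Type*) [TopologicalSpace X] : Set (Set (Set X)) := {𝒰 | IsOCover 𝒰}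

/-- `Ω_𝓑(X)`: all open `𝓑`-ω-covers of `X`. -/
def BOmegaCovers {X : Type*} [TopologicalSpace X] (𝓑 : Set (Set X)) : Set (Set (Set X)) :=
  {𝒰 | IsOCover 𝒰 ∧ Set.univ ∉ 𝒰 ∧ ∀ B ∈ 𝓑, ∃ U ∈ 𝒰, B ⊆ U}

/-- `Γ_𝓑(X)`: all open `𝓑`-γ-covers of `X`. -/
def BGammaCovers {X : Type*} [TopologicalSpace X] (𝓑 : Set (Set X)) : Set (Set (Set X)) :=
  {𝒰 | IsOCover 𝒰 ∧ 𝒰.Infinite ∧ ∀ B ∈ 𝓑, {U ∈ 𝒰 | ¬ B ⊆ U}.Finite}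

/-- `Ω^s_𝓑(X)`: all open strong `𝓑`-ω-covers of `X`. -/
def BOmegaSCovers {X : Type*} [UniformSpace X] (𝓑 : Set (Set X)) : Set (Set (Set X)) :=
  {𝒰 | IsOCover 𝒰 ∧ Set.univ ∉ 𝒰 ∧ ∀ B ∈ 𝓑, ∃ U ∈ 𝒰, ∃ V ∈ uniformity X, UBall B V ⊆ U}

/-- `Γ^s_𝓑(X)`: all open strong `𝓑`-γ-covers of `X`. -/
def BGammaSCovers {X : Type*} [UniformSpace X] (𝓑 : Set (Set X)) : Set (Set (Set X)) :=
  {𝒰 | IsOCover 𝒰 ∧ 𝒰.Infinite ∧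
    ∀ B ∈ 𝓑, {U ∈ 𝒰 | ¬ ∃ V ∈ uniformity X, UBall B V ⊆ U}.Finite}

/-- `B` and the complement of `U` are functionally separated. -/
def FunSep {X : Type*} [TopologicalSpace X] (B U : Set X) : Prop :=
  ∃ f : X → ℝ, Continuous f ∧ (∀ x ∈ B, f x = 0) ∧ ∀ x ∈ Uᶜ, f x = 1

/-- `Ω_{𝓑^f}(X)`: all open functionally separated `𝓑`-ω-covers of `X`. -/
def BfOmegaCovers {X : Type*} [TopologicalSpace X] (𝓑 : Set (Set X)) : Set (Set (Set X)) :=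
  {𝒰 | IsOCover 𝒰 ∧ ∀ B ∈ 𝓑, ∃ U ∈ 𝒰, FunSep B U}

/-- `Γ_{𝓑^f}(X)`: all open functionally separated `𝓑`-γ-covers of `X`. -/
def BfGammaCovers {X : Type*} [TopologicalSpace X] (𝓑 : Set (Set X)) : Set (Set (Set X)) :=
  {𝒰 | IsOCover 𝒰 ∧ 𝒰.Infinite ∧ ∀ B ∈ 𝓑, {U ∈ 𝒰 | ¬ FunSep B U}.Finite}

/-- The bornology `Fin` of finite subsets. -/
def FinB (X : Type*) : Set (Set X) := {B | B.Finite}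

/-- `𝒟(H)`: subsets of `H` dense in `H` w.r.t. the topology `t`. -/
def DFam {X : Type*} (t : TopologicalSpace (X → ℝ)) (H : Set (X → ℝ)) : Set (Set (X → ℝ)) :=
  {F | F ⊆ H ∧ H ⊆ @closure _ t F}

/-- `𝒮(H)`: subsets of `H` sequentially dense in `H` w.r.t. the topology `t`. -/
def SFam {X : Type*} (t : TopologicalSpace (X → ℝ)) (H : Set (X → ℝ)) : Set (Set (X → ℝ)) :=
  {F | F ⊆ H ∧ ∀ h ∈ H, ∃ s : ℕ → X → ℝ, (∀ n, s n ∈ F) ∧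
    Filter.Tendsto s Filter.atTop (@nhds _ t h)}

/-- `𝒫(H)`: pointwise dense subsets of `H`. -/
def PFam {X : Type*} (H : Set (X → ℝ)) : Set (Set (X → ℝ)) :=
  {F | F ⊆ H ∧ ∀ h ∈ H, ∀ x : X, h x ∈ closure {y : ℝ | ∃ f ∈ F, f x = y}}

/-- `𝒟↑(H)`: upper dense subsets of `H` w.r.t. the topology `t`. -/
def UpperDenseFam {X : Type*} (t : TopologicalSpace (X → ℝ)) (H : Set (X → ℝ)) :
    Set (Set (X → ℝ)) :=
  {F | F ⊆ H ∧ ∀ f ∈ H, {h | h ∈ H ∧ f ≤ h} ⊆ @closure _ t {h | h ∈ F ∧ f ≤ h ∧ h - f ∈ H}}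

/-- `𝒮↑(H)`: upper sequentially dense subsets of `H` w.r.t. the topology `t`. -/
def UpperSeqDenseFam {X : Type*} (t : TopologicalSpace (X → ℝ)) (H : Set (X → ℝ)) :
    Set (Set (X → ℝ)) :=
  {F | F ⊆ H ∧ ∀ f ∈ H, ∃ s : ℕ → X → ℝ,
    (∀ n, s n ∈ F ∧ f ≤ s n ∧ s n - f ∈ H) ∧
    Filter.Tendsto s Filter.atTop (@nhds _ t f)}

/-- `H` is separable w.r.t. the topology `t`. -/
def SeparableIn {X : Type*} (t : TopologicalSpace (X → ℝ)) (H : Set (X → ℝ)) : Prop :=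
  ∃ D : Set (X → ℝ), D.Countable ∧ D ∈ DFam t H

/-- `H` is sequentially separable w.r.t. the topology `t`. -/
def SeqSeparableIn {X : Type*} (t : TopologicalSpace (X → ℝ)) (H : Set (X → ℝ)) : Prop :=
  ∃ D : Set (X → ℝ), D.Countable ∧ D ∈ SFam t H

/-- Property `(𝒪_h)`. -/
def PropO {X : Type*} (F : Set (X → ℝ)) (h : X → ℝ) : Prop :=
  ∀ x : X, h x ∈ closure {y : ℝ | ∃ f ∈ F, f x = y}

/-- Property `(Ω_h)_𝓑`. -/
def PropOmega {X : Type*} (𝓑 : Set (Set X)) (F : Set (X → ℝ)) (h : X → ℝ) : Prop :=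
  h ∉ F ∧ h ∈ @closure _ (tauB 𝓑) F

/-- Property `(Γ_h)_𝓑`. -/
def PropGamma {X : Type*} (𝓑 : Set (Set X)) (F : Set (X → ℝ)) (h : X → ℝ) : Prop :=
  F.Infinite ∧ ∀ ε : ℝ, 0 < ε → ∀ B ∈ 𝓑, {f ∈ F | ∃ x ∈ B, ε ≤ |f x - h x|}.Finite

/-- `𝒪_{h,𝓑}(H)`. -/
def OFam {X : Type*} (h : X → ℝ) (H : Set (X → ℝ)) : Set (Set (X → ℝ)) :=
  {F | F ⊆ H ∧ PropO F h ∧ ∀ f ∈ F, h ≤ f ∧ f - h ∈ H}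

/-- `Ω_{h,𝓑}(H)`. -/
def OmegaFam {X : Type*} (𝓑 : Set (Set X)) (h : X → ℝ) (H : Set (X → ℝ)) :
    Set (Set (X → ℝ)) :=
  {F | F ⊆ H ∧ PropOmega 𝓑 F h ∧ ∀ f ∈ F, h ≤ f ∧ f - h ∈ H}

/-- `Γ_{h,𝓑}(H)`. -/
def GammaFam {X : Type*} (𝓑 : Set (Set X)) (h : X → ℝ) (H : Set (X → ℝ)) :
    Set (Set (X → ℝ)) :=
  {F | F ⊆ H ∧ PropGamma 𝓑 F h ∧ ∀ f ∈ F, h ≤ f ∧ f - h ∈ H}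

open Classical in
/-- The function `f_{U,g}`. -/
noncomputable def fUg {X : Type*} (U : Set X) (g : X → ℝ) : X → ℝ :=
  fun x => if x ∈ U then g x else g x + 1 + ⨆ y, |g y|

/-- The family `S(𝒰)`. -/
def SU {X : Type*} [TopologicalSpace X] (𝒰 : Set (Set X)) : Set (X → ℝ) :=
  {f | ∃ U ∈ 𝒰, ∃ g ∈ USCb X, f = fUg U g}

/-- `Ψ_𝓑(X)` for `Ψ = 𝒪, Ω, Γ` coded by `0, 1, 2 : Fin 3`. -/
def covFam (X : Type*) [TopologicalSpace X] (𝓑 : Set (Set X)) (i : Fin 3) :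
    Set (Set (Set X)) :=
  if i = 0 then OCovers X else if i = 1 then BOmegaCovers 𝓑 else BGammaCovers 𝓑

/-- `Ψ_{h,𝓑}(H)` for `Ψ = 𝒪, Ω, Γ` coded by `0, 1, 2 : Fin 3`. -/
def funFam {X : Type*} (𝓑 : Set (Set X)) (h : X → ℝ) (H : Set (X → ℝ)) (i : Fin 3) :
    Set (Set (X → ℝ)) :=
  if i = 0 then OFam h H else if i = 1 then OmegaFam 𝓑 h H else GammaFam 𝓑 h H

/-- `H` (as a subspace w.r.t. the topology `t`) is Fréchet–Urysohn. -/
def FUOn {X : Type*} (t : TopologicalSpace (X → ℝ)) (H : Set (X → ℝ)) : Prop :=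
  ∀ A : Set (X → ℝ), A ⊆ H → ∀ y ∈ H, y ∈ @closure _ t A →
    ∃ s : ℕ → X → ℝ, (∀ n, s n ∈ A) ∧ Filter.Tendsto s Filter.atTop (@nhds _ t y)

/-- `H` (as a subspace w.r.t. the topology `t`) is strictly Fréchet–Urysohn. -/
def SFUOn {X : Type*} (t : TopologicalSpace (X → ℝ)) (H : Set (X → ℝ)) : Prop :=
  ∀ y ∈ H, ∀ A : ℕ → Set (X → ℝ), (∀ n, A n ⊆ H) → (∀ n, y ∈ @closure _ t (A n)) →
    ∃ s : ℕ → X → ℝ, (∀ n, s n ∈ A n) ∧ Filter.Tendsto s Filter.atTop (@nhds _ t y)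
namespace St5
open TopologicalSpace

variable {X : Type*}

/-- The generating subbasis of `tauB`. -/
def sub (𝓑 : Set (Set X)) : Set (Set (X → ℝ)) :=
  {S | ∃ (h : X → ℝ) (B : Set X) (ε : ℝ), B ∈ 𝓑 ∧ 0 < ε ∧ S = Nbhd B ε h}

lemma tauB_eq (𝓑 : Set (Set X)) : tauB 𝓑 = TopologicalSpace.generateFrom (sub 𝓑) := rfl

section Bor
variable {𝓑 : Set (Set X)}

lemma bor_down (h𝓑 : IsPBornology 𝓑) {A B : Set X} (hAB : A ⊆ B) (hB : B ∈ 𝓑) : A ∈ 𝓑 :=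
  h𝓑.2.1 A B hAB hB

lemma bor_union (h𝓑 : IsPBornology 𝓑) {A B : Set X} (hA : A ∈ 𝓑) (hB : B ∈ 𝓑) :
    A ∪ B ∈ 𝓑 := h𝓑.2.2.1 A B hA hB

lemma bor_empty (h𝓑 : IsPBornology 𝓑) : (∅ : Set X) ∈ 𝓑 := by
  obtain ⟨B, hB⟩ := h𝓑.1
  exact bor_down h𝓑 (Set.empty_subset B) hB

lemma bor_singleton (h𝓑 : IsPBornology 𝓑) (x : X) : ({x} : Set X) ∈ 𝓑 := by
  have hx : x ∈ ⋃₀ 𝓑 := by rw [h𝓑.2.2.2.2]; trivial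
  obtain ⟨B, hB, hxB⟩ := hx
  exact bor_down h𝓑 (by simpa using hxB) hB

lemma bor_finite (h𝓑 : IsPBornology 𝓑) {B : Set X} (hB : B.Finite) : B ∈ 𝓑 := by
  refine Set.Finite.induction_on (motive := fun s _ => s ∈ 𝓑) B hB (bor_empty h𝓑) ?_
  intro a s _ _ ih
  rw [Set.insert_eq]
  exact bor_union h𝓑 (bor_singleton h𝓑 _) ih

end Bor

section Top
variable {𝓑 : Set (Set X)}

lemma isOpen_nbhd {B : Set X} {ε : ℝ} (hB : B ∈ 𝓑) (hε : 0 < ε) (h : X → ℝ) :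
    IsOpen[tauB 𝓑] (Nbhd B ε h) := by
  show IsOpen[TopologicalSpace.generateFrom (sub 𝓑)] (Nbhd B ε h)
  exact TopologicalSpace.isOpen_generateFrom_of_mem ⟨h, B, ε, hB, hε, rfl⟩

lemma self_mem_nbhd {B : Set X} {ε : ℝ} (hε : 0 < ε) (h : X → ℝ) : h ∈ Nbhd B ε h := by
  intro x _
  simpa using hε

/-- The standard basis of `tauB`: finite intersections of subbasic sets. -/
lemma basis_tauB (𝓑 : Set (Set X)) :
    @TopologicalSpace.IsTopologicalBasis _ (tauB 𝓑)
      ((fun f => ⋂₀ f) '' {f : Set (Set (X → ℝ)) | f.Finite ∧ f ⊆ sub 𝓑}) := by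
  letI := tauB 𝓑
  exact TopologicalSpace.isTopologicalBasis_of_subbasis (tauB_eq 𝓑)

/-- Criterion for membership in a `tauB`-closure. -/
lemma mem_closure_tauB {A : Set (X → ℝ)} {w : X → ℝ}
    (H : ∀ ts : Set (Set (X → ℝ)), ts.Finite → ts ⊆ sub 𝓑 → w ∈ ⋂₀ ts →
      (⋂₀ ts ∩ A).Nonempty) :
    w ∈ @closure _ (tauB 𝓑) A := by
  letI := tauB 𝓑
  rw [mem_closure_iff]
  intro o ho hwo
  obtain ⟨v, ⟨ts, ⟨hts1, hts2⟩, rfl⟩, hwv, hvo⟩ :=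
    (basis_tauB 𝓑).exists_subset_of_mem_open hwo ho
  obtain ⟨a, ha1, ha2⟩ := H ts hts1 hts2 hwv
  exact ⟨a, hvo ha1, ha2⟩

/-- Extraction from a `tauB`-closure via a single subbasic neighborhood. -/
lemma closure_tauB_nbhd {A : Set (X → ℝ)} {w : X → ℝ}
    (hw : w ∈ @closure _ (tauB 𝓑) A) {B : Set X} {ε : ℝ} (hB : B ∈ 𝓑) (hε : 0 < ε) :
    ∃ a ∈ A, ∀ x ∈ B, |w x - a x| < ε := by
  letI := tauB 𝓑
  rw [mem_closure_iff] at hw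
  obtain ⟨a, ha1, ha2⟩ := hw _ (isOpen_nbhd hB hε w) (self_mem_nbhd hε w)
  exact ⟨a, ha2, ha1⟩

/-- Criterion for `tauB`-convergence. -/
lemma tendsto_tauB {s : ℕ → X → ℝ} {f : X → ℝ}
    (H : ∀ ts : Set (Set (X → ℝ)), ts.Finite → ts ⊆ sub 𝓑 → f ∈ ⋂₀ ts →
      ∀ᶠ j in Filter.atTop, s j ∈ ⋂₀ ts) :
    Filter.Tendsto s Filter.atTop (@nhds _ (tauB 𝓑) f) := by
  letI := tauB 𝓑
  rw [tendsto_nhds]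
  intro o ho hfo
  obtain ⟨v, ⟨ts, ⟨hts1, hts2⟩, rfl⟩, hwv, hvo⟩ :=
    (basis_tauB 𝓑).exists_subset_of_mem_open hfo ho
  exact (H ts hts1 hts2 hwv).mono fun j hj => hvo hj

lemma tendsto_tauB_nbhd {s : ℕ → X → ℝ} {f : X → ℝ}
    (hs : Filter.Tendsto s Filter.atTop (@nhds _ (tauB 𝓑) f))
    {B : Set X} {ε : ℝ} (hB : B ∈ 𝓑) (hε : 0 < ε) :
    ∀ᶠ j in Filter.atTop, ∀ x ∈ B, |f x - s j x| < ε := by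
  letI := tauB 𝓑
  exact hs ((isOpen_nbhd hB hε f).mem_nhds (self_mem_nbhd hε f))

/-- Gluing lemma: elements agreeing with `w` on a suitable `B ∈ 𝓑` lie in the same
finite intersection of subbasic sets. -/
lemma glue (h𝓑 : IsPBornology 𝓑) {ts : Set (Set (X → ℝ))} (hts : ts.Finite)
    (hsub : ts ⊆ sub 𝓑) :
    ∃ B ∈ 𝓑, ∀ g w : X → ℝ, w ∈ ⋂₀ ts → (∀ x ∈ B, g x = w x) → g ∈ ⋂₀ ts := by
  refine Set.Finite.induction_on
    (motive := fun ts _ => ts ⊆ sub 𝓑 → ∃ B ∈ 𝓑, ∀ g w : X → ℝ, w ∈ ⋂₀ ts →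
      (∀ x ∈ B, g x = w x) → g ∈ ⋂₀ ts) ts hts (fun _ => ⟨∅, bor_empty h𝓑, fun g w _ _ => by simp⟩)
    ?_ hsub
  intro s ts _ _ ih hsub'
  obtain ⟨B, hB, hBP⟩ := ih (fun u hu => hsub' (Set.mem_insert_of_mem _ hu))
  obtain ⟨h, Bs, ε, hBs, hε, rfl⟩ := hsub' (Set.mem_insert _ _)
  refine ⟨Bs ∪ B, bor_union h𝓑 hBs hB, fun g w hw hgw => ?_⟩
  rw [Set.sInter_insert] at hw ⊢
  refine ⟨fun x hx => ?_, hBP g w hw.2 fun x hx => hgw x (Set.mem_union_right _ hx)⟩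
  rw [hgw x (Set.mem_union_left _ hx)]
  exact hw.1 x hx

end Top
end St5
namespace St5
open Classical
section USC
variable {X : Type*} [TopologicalSpace X]

lemma uscb_congr {f g : X → ℝ} (h : f = g) (hf : f ∈ USCb X) : g ∈ USCb X := h ▸ hf

lemma uscb_const (c : ℝ) : (fun _ : X => c) ∈ USCb X := by
  refine ⟨fun a => ?_, |c|, fun x => le_refl _⟩
  by_cases h : c < a
  · convert isOpen_univ using 1
    ext x; simpa using h
  · convert isOpen_empty using 1
    ext x; simpa using h

lemma uscb_zero : (0 : X → ℝ) ∈ USCb X := uscb_const 0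

lemma uscb_add {f g : X → ℝ} (hf : f ∈ USCb X) (hg : g ∈ USCb X) : f + g ∈ USCb X := by
  obtain ⟨hfo, Mf, hMf⟩ := hf
  obtain ⟨hgo, Mg, hMg⟩ := hg
  refine ⟨fun a => ?_, Mf + Mg, fun x => ?_⟩
  · have : {x | (f + g) x < a} = ⋃ q : ℚ, {x | f x < q} ∩ {x | g x < a - q} := by
      ext x
      simp only [Set.mem_iUnion, Set.mem_inter_iff, Set.mem_setOf_eq, Pi.add_apply]
      constructor
      · intro h
        obtain ⟨q, hq1, hq2⟩ := exists_rat_btwn (show f x < a - g x by linarith)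
        exact ⟨q, hq1, by linarith⟩
      · rintro ⟨q, hq1, hq2⟩; linarith
    rw [this]
    exact isOpen_iUnion fun q => (hfo q).inter (hgo _)
  · calc |(f + g) x| ≤ |f x| + |g x| := abs_add_le _ _
      _ ≤ Mf + Mg := add_le_add (hMf x) (hMg x)

/-- The "jump" function: `0` on an open set, constant `c ≥ 0` outside. -/
lemma uscb_step {U : Set X} (hU : IsOpen U) {c : ℝ} (hc : 0 ≤ c) :
    (fun x => if x ∈ U then (0 : ℝ) else c) ∈ USCb X := by
  refine ⟨fun a => ?_, c, fun x => ?_⟩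
  · rcases le_or_gt a 0 with ha | ha
    · convert isOpen_empty using 1
      ext x
      simp only [Set.mem_setOf_eq, Set.mem_empty_iff_false, iff_false, not_lt]
      split <;> linarith
    · rcases lt_or_ge c a with hca | hca
      · convert isOpen_univ using 1
        ext x
        simp only [Set.mem_setOf_eq, Set.mem_univ, iff_true]
        split <;> linarith
      · convert hU using 1
        ext x
        simp only [Set.mem_setOf_eq]
        constructor
        · intro h
          by_contra hx
          rw [if_neg hx] at h
          linarith
        · intro hx
          rw [if_pos hx]
          linarith
  · by_cases hx : x ∈ U
    · simp [hx, hc]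
    · simp [hx, abs_of_nonneg hc]

lemma uscb_nonneg_combo {u : X → ℝ} {U : Set X} (hu : u ∈ USCb X) (hU : IsOpen U) {c : ℝ}
    (hc : 0 ≤ c) : (fun x => u x + if x ∈ U then (0 : ℝ) else c) ∈ USCb X :=
  uscb_add hu (uscb_step hU hc)

/-- Envelope extension: on a set `B` that is discrete-in-itself, any bounded nonnegative
prescription extends to a bounded nonnegative USC function on `X`. -/
lemma env_exists {B : Set X} (hDI : ∀ x ∈ B, x ∉ closure (B \ {x}))
    (d : X → ℝ) {M : ℝ} (hd0 : ∀ x, 0 ≤ d x) (hdM : ∀ x, d x ≤ M) :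
    ∃ u ∈ USCb X, (∀ x, 0 ≤ u x) ∧ (∀ x ∈ B, u x = d x) := by
  classical
  set S : X → Set ℝ := fun x =>
    {c | 0 ≤ c ∧ ∃ U, IsOpen U ∧ x ∈ U ∧ ∀ y ∈ U ∩ B, d y ≤ c} with hS
  have hM0 : 0 ≤ max M 0 := le_max_right _ _
  have hSne : ∀ x, (S x).Nonempty := fun x =>
    ⟨max M 0, hM0, Set.univ, isOpen_univ, trivial, fun y _ => le_trans (hdM y) (le_max_left _ _)⟩
  have hSbd : ∀ x, BddBelow (S x) := fun x => ⟨0, fun c hc => hc.1⟩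
  set u : X → ℝ := fun x => sInf (S x) with hu
  have hu0 : ∀ x, 0 ≤ u x := fun x => le_csInf (hSne x) fun c hc => hc.1
  have huM : ∀ x, u x ≤ max M 0 := fun x => csInf_le (hSbd x) (by
    exact ⟨hM0, Set.univ, isOpen_univ, trivial, fun y _ => le_trans (hdM y) (le_max_left _ _)⟩)
  refine ⟨u, ⟨fun a => ?_, max M 0, fun x => ?_⟩, hu0, fun x hx => ?_⟩
  · rw [isOpen_iff_forall_mem_open]
    intro x hx
    have : u x < a := hx
    obtain ⟨c, hc, hca⟩ := exists_lt_of_csInf_lt (hSne x) this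
    obtain ⟨hc0, U, hUo, hxU, hUc⟩ := hc
    refine ⟨U, fun z hz => ?_, hUo, hxU⟩
    have : c ∈ S z := ⟨hc0, U, hUo, hz, hUc⟩
    exact lt_of_le_of_lt (csInf_le (hSbd z) this) hca
  · rw [abs_of_nonneg (hu0 x)]
    exact huM x
  · refine le_antisymm ?_ ?_
    · refine csInf_le (hSbd x) ?_
      refine ⟨hd0 x, (closure (B \ {x}))ᶜ, isClosed_closure.isOpen_compl, hDI x hx, ?_⟩
      rintro y ⟨hy1, hy2⟩
      have : y ∉ B \ {x} := fun hmem => hy1 (subset_closure hmem)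
      have : y = x := by
        by_contra hne
        exact this ⟨hy2, hne⟩
      rw [this]
    · refine le_csInf (hSne x) fun c hc => ?_
      obtain ⟨hc0, U, hUo, hxU, hUc⟩ := hc
      exact hUc x ⟨hxU, hx⟩

end USC

section FUG
variable {X : Type*} [TopologicalSpace X]

lemma fUg_eq (U : Set X) (g : X → ℝ) (x : X) :
    fUg U g x = g x + if x ∈ U then 0 else (1 + ⨆ y, |g y|) := by
  unfold fUg
  split <;> ring

lemma csup_abs_nonneg (g : X → ℝ) : 0 ≤ ⨆ y, |g y| :=
  Real.iSup_nonneg fun y => abs_nonneg _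

lemma csup_abs_ge {g : X → ℝ} {M : ℝ} (hM : ∀ x, |g x| ≤ M) (x : X) :
    |g x| ≤ ⨆ y, |g y| :=
  le_ciSup ⟨M, by rintro _ ⟨y, rfl⟩; exact hM y⟩ x

lemma fUg_mem {U : Set X} (hU : IsOpen U) {g : X → ℝ} (hg : g ∈ USCb X) :
    fUg U g ∈ USCb X := by
  refine uscb_congr (f := fun x => g x + if x ∈ U then (0:ℝ) else (1 + ⨆ y, |g y|)) ?_ ?_
  · funext x; rw [fUg_eq]
  · exact uscb_nonneg_combo hg hU (by linarith [csup_abs_nonneg g])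

lemma fUg_ge (U : Set X) (g : X → ℝ) (x : X) : g x ≤ fUg U g x := by
  rw [fUg_eq]
  split <;> [linarith; linarith [csup_abs_nonneg g]]

lemma fUg_on {U : Set X} {x : X} (hx : x ∈ U) (g : X → ℝ) : fUg U g x = g x := by
  rw [fUg_eq, if_pos hx, add_zero]

lemma fUg_off_ge_one {U : Set X} {x : X} (hx : x ∉ U) {g : X → ℝ} {M : ℝ}
    (hM : ∀ x, |g x| ≤ M) : 1 ≤ fUg U g x := by
  rw [fUg_eq, if_neg hx]
  have h1 : -g x ≤ |g x| := neg_le_abs _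
  have h2 := csup_abs_ge hM x
  linarith

lemma fUg_sub_mem {U : Set X} (hU : IsOpen U) {g : X → ℝ} (hg : g ∈ USCb X) :
    fUg U g - g ∈ USCb X := by
  refine uscb_congr (f := fun x => if x ∈ U then (0:ℝ) else (1 + ⨆ y, |g y|)) ?_ ?_
  · funext x
    simp only [Pi.sub_apply, fUg_eq]
    ring
  · exact uscb_step hU (by linarith [csup_abs_nonneg g])

/-- Characteristic-type function of the complement of `U`. -/
noncomputable def chi (U : Set X) : X → ℝ := fun x => if x ∈ U then 0 else 1

lemma chi_mem {U : Set X} (hU : IsOpen U) : chi U ∈ USCb X := uscb_step hU zero_le_one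

lemma chi_nonneg (U : Set X) (x : X) : 0 ≤ chi U x := by
  unfold chi; split <;> norm_num

lemma chi_le_one (U : Set X) (x : X) : chi U x ≤ 1 := by
  unfold chi; split <;> norm_num

lemma chi_on {U : Set X} {x : X} (hx : x ∈ U) : chi U x = 0 := if_pos hx

lemma chi_off {U : Set X} {x : X} (hx : x ∉ U) : chi U x = 1 := if_neg hx

lemma chi_inj : Function.Injective (chi (X := X)) := by
  intro U V h
  ext x
  constructor <;> intro hx <;> by_contra hc
  · have := congrFun h x
    rw [chi_on hx, chi_off hc] at this
    norm_num at this
  · have := congrFun h x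
    rw [chi_off hc, chi_on hx] at this
    norm_num at this

lemma chi_ne_zero {U : Set X} (hU : U ≠ Set.univ) : chi U ≠ 0 := by
  intro h
  obtain ⟨x, hx⟩ : ∃ x, x ∉ U := by
    by_contra hc
    push_neg at hc
    exact hU (Set.eq_univ_of_forall hc)
  have := congrFun h x
  rw [chi_off hx] at this
  norm_num at this

lemma chi_lt_one_subset {U : Set X} {B : Set X} (h : ∀ x ∈ B, chi U x < 1) : B ⊆ U := by
  intro x hx
  by_contra hc
  have := h x hx
  rw [chi_off hc] at this
  norm_num at this

end FUG
end St5
namespace St5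
open Classical
section DIFIN
variable {X : Type*} [TopologicalSpace X] [T2Space X] {𝓑 : Set (Set X)}

lemma uscb_point (x0 : X) {c : ℝ} (hc : 0 ≤ c) :
    (fun y => if y = x0 then c else 0) ∈ USCb X := by
  have h := uscb_step (U := ({x0}ᶜ : Set X)) isClosed_singleton.isOpen_compl hc
  refine uscb_congr ?_ h
  funext y
  by_cases hy : y = x0 <;> simp [hy]

/-- Countable density of `C*(X)` implies each member of `𝓑` is discrete-in-itself. -/
lemma di_of_hcd
    (hcd : ∀ f ∈ USCb X, ∃ G : Set (X → ℝ), G ⊆ Cb X ∧ G.Countable ∧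
      f ∈ @closure _ (tauB 𝓑) G)
    {B : Set X} (hB : B ∈ 𝓑) : ∀ x ∈ B, x ∉ closure (B \ {x}) := by
  intro x hx hcl
  set f : X → ℝ := fun y => if y = x then 1 else 0 with hf
  obtain ⟨G, hG1, _, hG3⟩ := hcd f (uscb_point x zero_le_one)
  obtain ⟨c, hcG, hc⟩ := closure_tauB_nbhd hG3 hB (by norm_num : (0:ℝ) < 1/2)
  have hcont : Continuous c := (hG1 hcG).1
  have hcx : 1/2 < c x := by
    have h2 : |1 - c x| < 1/2 := by simpa [hf] using hc x hx
    rw [abs_lt] at h2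
    linarith [h2.1]
  have hopen : IsOpen {y | 1/2 < c y} := isOpen_lt continuous_const hcont
  rw [mem_closure_iff] at hcl
  obtain ⟨y, hy1, hy2, hy3⟩ := hcl _ hopen hcx
  have hyx : y ≠ x := by simpa using hy3
  have h3 : |0 - c y| < 1/2 := by simpa [hf, hyx] using hc y hy2
  rw [abs_lt] at h3
  simp only [Set.mem_setOf_eq] at hy1
  linarith [h3.2]

/-- Envelope extension on members of `𝓑`, given countable density of `C*`. -/
lemma env_of_hcd
    (hcd : ∀ f ∈ USCb X, ∃ G : Set (X → ℝ), G ⊆ Cb X ∧ G.Countable ∧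
      f ∈ @closure _ (tauB 𝓑) G)
    {B : Set X} (hB : B ∈ 𝓑) (d : X → ℝ) {M : ℝ} (hd0 : ∀ x, 0 ≤ d x) (hdM : ∀ x, d x ≤ M) :
    ∃ u ∈ USCb X, (∀ x, 0 ≤ u x) ∧ (∀ x ∈ B, u x = d x) :=
  env_exists (di_of_hcd hcd hB) d hd0 hdM

/-- Separability together with countable density of `C*` forces all members of `𝓑`
to be finite. -/
lemma fin_of_sep
    (hcd : ∀ f ∈ USCb X, ∃ G : Set (X → ℝ), G ⊆ Cb X ∧ G.Countable ∧
      f ∈ @closure _ (tauB 𝓑) G)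
    (hsep : SeparableIn (tauB 𝓑) (USCb X)) {B : Set X} (hB : B ∈ 𝓑) : B.Finite := by
  by_contra hinf
  rw [← Set.not_infinite, not_not] at hinf
  obtain ⟨D, hDc, hD1, hD2⟩ := hsep
  have hDI := di_of_hcd hcd hB
  set e := hinf.natEmbedding with he
  have key : ∀ A : Set ℕ, ∃ c ∈ D, ∀ n : ℕ,
      ((n ∈ A → 1/2 < c (e n)) ∧ (n ∉ A → c (e n) < 1/2)) := by
    intro A
    set SA : Set X := {x | ∃ n ∈ A, (e n : X) = x} with hSA
    obtain ⟨u, hu1, hu2, hu3⟩ := env_exists hDI (fun x => if x ∈ SA then 1 else 0)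
      (M := 1) (fun x => by split <;> norm_num)
      (fun x => by split <;> norm_num)
    obtain ⟨c, hcD, hc⟩ := closure_tauB_nbhd (hD2 hu1) hB (by norm_num : (0:ℝ) < 1/2)
    refine ⟨c, hcD, fun n => ⟨fun hn => ?_, fun hn => ?_⟩⟩
    · have hmem : ((e n : X)) ∈ SA := ⟨n, hn, rfl⟩
      have := hc (e n) (e n).2
      rw [hu3 (e n) (e n).2] at this
      simp only [if_pos hmem] at this
      rw [abs_lt] at this
      linarith [this.1]
    · have hmem : ((e n : X)) ∉ SA := by
        rintro ⟨m, hm, hme⟩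
        have : m = n := e.injective (Subtype.ext hme)
        exact hn (this ▸ hm)
      have := hc (e n) (e n).2
      rw [hu3 (e n) (e n).2] at this
      simp only [if_neg hmem] at this
      rw [abs_lt] at this
      linarith [this.2]
  choose c hcD hcP using key
  have hinj : Function.Injective c := by
    intro A A' hAA
    ext n
    constructor
    · intro hn
      by_contra hn'
      have h1 := (hcP A n).1 hn
      have h2 := (hcP A' n).2 hn'
      rw [hAA] at h1
      linarith
    · intro hn
      by_contra hn'
      have h1 := (hcP A n).2 hn'
      have h2 := (hcP A' n).1 hn
      rw [← hAA] at h2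
      linarith
  obtain ⟨g, hg⟩ := Set.countable_iff_exists_injective.mp hDc
  have : Function.Injective (fun A : Set ℕ => g ⟨c A, hcD A⟩) := by
    intro A A' h
    exact hinj (congrArg Subtype.val (hg h))
  exact Function.cantor_injective _ this

end DIFIN

section FINTOP
variable {X : Type*} {𝓑 : Set (Set X)}

lemma slack {B : Set X} (hBfin : B.Finite) (h w : X → ℝ) (ε : ℝ)
    (hw : ∀ x ∈ B, |h x - w x| < ε) :
    ∃ δ > 0, ∀ g : X → ℝ, (∀ x ∈ B, |w x - g x| < δ) → ∀ x ∈ B, |h x - g x| < ε := by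
  refine Set.Finite.induction_on
    (motive := fun B _ => (∀ x ∈ B, |h x - w x| < ε) → ∃ δ > 0, ∀ g : X → ℝ,
      (∀ x ∈ B, |w x - g x| < δ) → ∀ x ∈ B, |h x - g x| < ε) B hBfin
    (fun _ => ⟨1, one_pos, fun g _ x hx => absurd hx (Set.notMem_empty x)⟩) ?_ hw
  intro a s _ _ ih hw'
  obtain ⟨δs, hδs, hP⟩ := ih fun x hx => hw' x (Set.mem_insert_of_mem _ hx)
  have ha := hw' a (Set.mem_insert _ _)
  refine ⟨min δs (ε - |h a - w a|), lt_min hδs (by linarith), fun g hg x hx => ?_⟩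
  rcases Set.mem_insert_iff.mp hx with rfl | hx
  · have h1 := hg x (Set.mem_insert _ _)
    have h2 : |h x - g x| ≤ |h x - w x| + |w x - g x| := by
      calc |h x - g x| = |(h x - w x) + (w x - g x)| := by ring_nf
        _ ≤ |h x - w x| + |w x - g x| := abs_add_le _ _
    have h3 : |w x - g x| < ε - |h x - w x| := lt_of_lt_of_le h1 (min_le_right _ _)
    linarith
  · exact hP g (fun y hy => lt_of_lt_of_le (hg y (Set.mem_insert_of_mem _ hy))
      (min_le_left _ _)) x hx

/-- Centered neighborhoods: under `F1` every finite intersection of subbasic sets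
containing `w` contains a ball `Nbhd B δ w`. -/
lemma centered (h𝓑 : IsPBornology 𝓑) (hfin : ∀ B ∈ 𝓑, B.Finite)
    {ts : Set (Set (X → ℝ))} (hts : ts.Finite) (hsub : ts ⊆ sub 𝓑) {w : X → ℝ}
    (hw : w ∈ ⋂₀ ts) :
    ∃ B ∈ 𝓑, ∃ δ > 0, ∀ g : X → ℝ, (∀ x ∈ B, |w x - g x| < δ) → g ∈ ⋂₀ ts := by
  refine Set.Finite.induction_on
    (motive := fun ts _ => ts ⊆ sub 𝓑 → w ∈ ⋂₀ ts → ∃ B ∈ 𝓑, ∃ δ > 0, ∀ g : X → ℝ,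
      (∀ x ∈ B, |w x - g x| < δ) → g ∈ ⋂₀ ts) ts hts
    (fun _ _ => ⟨∅, bor_empty h𝓑, 1, one_pos, fun g _ => by simp⟩) ?_ hsub hw
  intro s ts _ _ ih hsub' hw'
  rw [Set.sInter_insert] at hw'
  obtain ⟨B, hB, δ', hδ', hP⟩ := ih (fun u hu => hsub' (Set.mem_insert_of_mem _ hu)) hw'.2
  obtain ⟨h, Bs, ε, hBs, hε, rfl⟩ := hsub' (Set.mem_insert _ _)
  obtain ⟨δs, hδs, hPs⟩ := slack (hfin Bs hBs) h w ε hw'.1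
  refine ⟨Bs ∪ B, bor_union h𝓑 hBs hB, min δs δ', lt_min hδs hδ', fun g hg => ?_⟩
  rw [Set.sInter_insert]
  constructor
  · exact hPs g (fun x hx => lt_of_lt_of_le (hg x (Set.mem_union_left _ hx)) (min_le_left _ _))
  · exact hP g fun x hx => lt_of_lt_of_le (hg x (Set.mem_union_right _ hx)) (min_le_right _ _)

/-- Under `F1`, a closure criterion with centered balls. -/
lemma mem_closure_tauB_fin (h𝓑 : IsPBornology 𝓑) (hfin : ∀ B ∈ 𝓑, B.Finite)
    {A : Set (X → ℝ)} {w : X → ℝ}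
    (H : ∀ B ∈ 𝓑, ∀ δ : ℝ, 0 < δ → ∃ a ∈ A, ∀ x ∈ B, |w x - a x| < δ) :
    w ∈ @closure _ (tauB 𝓑) A := by
  refine mem_closure_tauB fun ts hts hsub hw => ?_
  obtain ⟨B, hB, δ, hδ, hP⟩ := centered h𝓑 hfin hts hsub hw
  obtain ⟨a, ha1, ha2⟩ := H B hB δ hδ
  exact ⟨a, hP a ha2, ha1⟩

end FINTOP
end St5
namespace St5
open Classical
section TRANS
variable {X : Type*} {𝓑 : Set (Set X)}

lemma continuous_add_right (d : X → ℝ) :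
    Continuous[tauB 𝓑, tauB 𝓑] (fun g => g + d) := by
  letI := tauB 𝓑
  rw [tauB_eq, continuous_generateFrom_iff]
  rintro S ⟨h, B, ε, hB, hε, rfl⟩
  have : (fun g : X → ℝ => g + d) ⁻¹' Nbhd B ε h = Nbhd B ε (h - d) := by
    ext g
    simp only [Set.mem_preimage, Nbhd, Set.mem_setOf_eq, Pi.add_apply, Pi.sub_apply]
    constructor <;> intro hg x hx <;> [skip; skip] <;>
      · have := hg x hx
        convert this using 2
        ring
  rw [this]
  exact isOpen_nbhd hB hε _

lemma closure_translate {A : Set (X → ℝ)} {w : X → ℝ}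
    (h : w ∈ @closure _ (tauB 𝓑) A) (d : X → ℝ) :
    w + d ∈ @closure _ (tauB 𝓑) ((fun g => g + d) '' A) := by
  letI := tauB 𝓑
  exact image_closure_subset_closure_image (continuous_add_right d) ⟨w, h, rfl⟩

lemma tendsto_translate {s : ℕ → X → ℝ} {f : X → ℝ}
    (hs : Filter.Tendsto s Filter.atTop (@nhds _ (tauB 𝓑) f)) (d : X → ℝ) :
    Filter.Tendsto (fun j => s j + d) Filter.atTop (@nhds _ (tauB 𝓑) (f + d)) := by
  letI := tauB 𝓑
  exact (((continuous_add_right d)).tendsto f).comp hs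

end TRANS

section UPPER
variable {X : Type*} [TopologicalSpace X] {𝓑 : Set (Set X)}

lemma upperDense_translate (hF : F ∈ UpperDenseFam (tauB 𝓑) (USCb X)) {d : X → ℝ}
    (hd : d ∈ USCb X) :
    {g | g ∈ USCb X ∧ g + d ∈ F} ∈ UpperDenseFam (tauB 𝓑) (USCb X) := by
  letI := tauB 𝓑
  refine ⟨fun g hg => hg.1, fun f hf w hw => ?_⟩
  have hfd : f + d ∈ USCb X := uscb_add hf hd
  have hwd : w + d ∈ {h | h ∈ USCb X ∧ f + d ≤ h} :=
    ⟨uscb_add hw.1 hd, fun x => add_le_add_left (hw.2 x) _⟩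
  have h1 := hF.2 (f + d) hfd hwd
  have h2 := closure_translate h1 (-d)
  have h3 : w + d + -d = w := by funext x; simp
  rw [h3] at h2
  refine closure_mono ?_ h2
  rintro e ⟨h, ⟨hhF, hfdh, hsub⟩, rfl⟩
  have he1 : h + -d = (h - (f + d)) + f := by funext x; simp; ring
  refine ⟨⟨uscb_congr he1.symm (uscb_add hsub hf), ?_⟩, fun x => ?_, ?_⟩
  · have : h + -d + d = h := by funext x; simp
    rw [this]; exact hhF
  · have := hfdh x
    simp only [Pi.add_apply, Pi.neg_apply] at this ⊢
    linarith
  · refine uscb_congr (f := h - (f + d)) ?_ hsub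
    funext x; simp; ring

lemma upperSeqDense_translate (hF : F ∈ UpperSeqDenseFam (tauB 𝓑) (USCb X)) {d : X → ℝ}
    (hd : d ∈ USCb X) :
    {g | g ∈ USCb X ∧ g + d ∈ F} ∈ UpperSeqDenseFam (tauB 𝓑) (USCb X) := by
  refine ⟨fun g hg => hg.1, fun f hf => ?_⟩
  obtain ⟨s, hs1, hs2⟩ := hF.2 (f + d) (uscb_add hf hd)
  refine ⟨fun j => s j + -d, fun j => ?_, ?_⟩
  · obtain ⟨hsF, hle, hsub⟩ := hs1 j
    have he1 : s j + -d = (s j - (f + d)) + f := by funext x; simp; ring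
    refine ⟨⟨uscb_congr he1.symm (uscb_add hsub hf), ?_⟩, fun x => ?_, ?_⟩
    · have : s j + -d + d = s j := by funext x; simp
      rw [this]; exact hsF
    · have := hle x
      simp only [Pi.add_apply, Pi.neg_apply] at this ⊢
      linarith
    · refine uscb_congr (f := s j - (f + d)) ?_ hsub
      funext x; simp; ring
  · have := tendsto_translate hs2 (-d)
    have h3 : f + d + -d = f := by funext x; simp
    rwa [h3] at this

lemma uscb_mem_upperSeqDense : USCb X ∈ UpperSeqDenseFam (tauB 𝓑) (USCb X) := by
  letI := tauB 𝓑
  refine ⟨subset_rfl, fun f hf => ⟨fun _ => f, fun n => ⟨hf, le_refl f, ?_⟩, ?_⟩⟩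
  · rw [sub_self]; exact uscb_zero
  · exact tendsto_const_nhds

lemma uscb_mem_upperDense (h𝓑 : IsPBornology 𝓑)
    (hcd : ∀ f ∈ USCb X, ∃ G : Set (X → ℝ), G ⊆ Cb X ∧ G.Countable ∧
      f ∈ @closure _ (tauB 𝓑) G) [T2Space X] :
    USCb X ∈ UpperDenseFam (tauB 𝓑) (USCb X) := by
  refine ⟨subset_rfl, fun f hf w hw => ?_⟩
  refine mem_closure_tauB fun ts hts hsub hwts => ?_
  obtain ⟨B, hB, hglue⟩ := glue h𝓑 hts hsub
  obtain ⟨Mw, hMw⟩ := hw.1.2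
  obtain ⟨Mf, hMf⟩ := hf.2
  obtain ⟨u, hu1, hu2, hu3⟩ := env_of_hcd hcd hB (fun x => max (w x - f x) 0)
    (M := Mw + Mf) (fun x => le_max_right _ _)
    (fun x => max_le (by have := abs_le.1 (hMw x); have := abs_le.1 (hMf x); linarith)
      (by have := abs_le.1 (hMw x); have := abs_le.1 (hMf x); linarith))
  have hagree : ∀ x ∈ B, (f + u) x = w x := fun x hx => by
    have h1 : u x = max (w x - f x) 0 := hu3 x hx
    have h2 : max (w x - f x) 0 = w x - f x := max_eq_left (by linarith [hw.2 x])
    simp only [Pi.add_apply]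
    rw [h1, h2]; ring
  refine ⟨f + u, hglue (f + u) w hwts hagree, uscb_add hf hu1, fun x => ?_, ?_⟩
  · simp only [Pi.add_apply]; linarith [hu2 x]
  · refine uscb_congr (f := u) ?_ hu1
    funext x; simp only [Pi.sub_apply, Pi.add_apply]; ring

lemma sep_of_S1dense (h𝓑 : IsPBornology 𝓑) [T2Space X]
    (hcd : ∀ f ∈ USCb X, ∃ G : Set (X → ℝ), G ⊆ Cb X ∧ G.Countable ∧
      f ∈ @closure _ (tauB 𝓑) G) (phi : Bool)
    (ha : S1 (cond phi (UpperDenseFam (tauB 𝓑) (USCb X))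
      (UpperSeqDenseFam (tauB 𝓑) (USCb X))) (DFam (tauB 𝓑) (USCb X))) :
    SeparableIn (tauB 𝓑) (USCb X) := by
  have hH : USCb X ∈ cond phi (UpperDenseFam (tauB 𝓑) (USCb X))
      (UpperSeqDenseFam (tauB 𝓑) (USCb X)) := by
    cases phi
    · exact uscb_mem_upperSeqDense
    · exact uscb_mem_upperDense h𝓑 hcd
  obtain ⟨s, _, hs2⟩ := ha (fun _ => USCb X) (fun _ => hH)
  exact ⟨Set.range s, Set.countable_range s, hs2⟩

end UPPER
end St5
namespace St5
open Classical
section DA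
variable {X : Type*} [TopologicalSpace X] {𝓑 : Set (Set X)}

lemma d_to_a (h𝓑 : IsPBornology 𝓑) (phi : Bool)
    (hsep : SeparableIn (tauB 𝓑) (USCb X))
    (hS1 : S1 (cond phi (UpperDenseFam (tauB 𝓑) (USCb X))
        (UpperSeqDenseFam (tauB 𝓑) (USCb X))) (OmegaFam 𝓑 (0 : X → ℝ) (USCb X))) :
    S1 (cond phi (UpperDenseFam (tauB 𝓑) (USCb X))
        (UpperSeqDenseFam (tauB 𝓑) (USCb X))) (DFam (tauB 𝓑) (USCb X)) := by
  letI := tauB 𝓑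
  obtain ⟨D, hDc, hD1, hD2⟩ := hsep
  have hDne : D.Nonempty := by
    rcases Set.eq_empty_or_nonempty D with rfl | h
    · exfalso
      have := hD2 uscb_zero
      rw [closure_empty] at this
      exact this
    · exact h
  obtain ⟨dfun, hdfun⟩ := hDc.exists_eq_range hDne
  have hdH : ∀ k, dfun k ∈ USCb X := fun k => hD1 (hdfun ▸ Set.mem_range_self k)
  set p := Nat.pairEquiv with hp
  intro u hu
  have key : ∀ k : ℕ, ∃ v : ℕ → X → ℝ,
      (∀ j, v j ∈ {g | g ∈ USCb X ∧ g + dfun k ∈ u (p (k, j))}) ∧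
      Set.range v ∈ OmegaFam 𝓑 (0 : X → ℝ) (USCb X) := by
    intro k
    refine hS1 (fun j => {g | g ∈ USCb X ∧ g + dfun k ∈ u (p (k, j))}) fun j => ?_
    cases phi with
    | true => exact upperDense_translate (hu (p (k, j))) (hdH k)
    | false => exact upperSeqDense_translate (hu (p (k, j))) (hdH k)
  choose v hv1 hv2 using key
  set s : ℕ → X → ℝ := fun n => v (p.symm n).1 (p.symm n).2 + dfun (p.symm n).1 with hs
  have hsmem : ∀ n, s n ∈ u n := by
    intro n
    have h1 := (hv1 (p.symm n).1 (p.symm n).2).2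
    have h2 : p ((p.symm n).1, (p.symm n).2) = n := by
      rw [show ((p.symm n).1, (p.symm n).2) = p.symm n from rfl]
      exact p.apply_symm_apply n
    rw [h2] at h1
    exact h1
  refine ⟨s, hsmem, ?_, ?_⟩
  · intro g hg
    obtain ⟨n, rfl⟩ := hg
    exact uscb_add (hv1 _ _).1 (hdH _)
  · have hDcl : D ⊆ closure (Set.range s) := by
      rw [hdfun]
      rintro _ ⟨k, rfl⟩
      have h0 := (hv2 k).2.1.2
      have h1 := closure_translate h0 (dfun k)
      have h2 : (0 : X → ℝ) + dfun k = dfun k := by funext x; simp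
      rw [h2] at h1
      refine closure_mono ?_ h1
      rintro _ ⟨g, ⟨j, rfl⟩, rfl⟩
      refine ⟨p (k, j), ?_⟩
      rw [hs]
      simp only [Equiv.symm_apply_apply]
    calc USCb X ⊆ closure D := hD2
      _ ⊆ closure (closure (Set.range s)) := closure_mono hDcl
      _ = closure (Set.range s) := closure_closure

end DA
end St5
namespace St5
open Classical
section AB
variable {X : Type*} [TopologicalSpace X] {𝓑 : Set (Set X)}

lemma su_subset_uscb {𝒰 : Set (Set X)} (hop : ∀ U ∈ 𝒰, IsOpen U) : SU 𝒰 ⊆ USCb X := by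
  rintro f ⟨U, hU, g, hg, rfl⟩
  exact fUg_mem (hop U hU) hg

lemma fUg_sub_f_mem {U : Set X} (hU : IsOpen U) {f u : X → ℝ} (hf : f ∈ USCb X)
    (hu : u ∈ USCb X) : fUg U (f + u) - f ∈ USCb X := by
  refine uscb_congr
    (f := fun x => u x + if x ∈ U then (0:ℝ) else (1 + ⨆ y, |(f + u) y|)) ?_
    (uscb_nonneg_combo hu hU (by linarith [csup_abs_nonneg (f + u)]))
  funext x
  simp only [Pi.sub_apply, fUg_eq, Pi.add_apply]
  ring

lemma su_upperDense [T2Space X] (h𝓑 : IsPBornology 𝓑)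
    (hcd : ∀ f ∈ USCb X, ∃ G : Set (X → ℝ), G ⊆ Cb X ∧ G.Countable ∧
      f ∈ @closure _ (tauB 𝓑) G)
    {𝒰 : Set (Set X)} (h𝒰 : 𝒰 ∈ BOmegaCovers 𝓑) :
    SU 𝒰 ∈ UpperDenseFam (tauB 𝓑) (USCb X) := by
  refine ⟨su_subset_uscb h𝒰.1.1, fun f hf w hw => ?_⟩
  refine mem_closure_tauB fun ts hts hsub hwts => ?_
  obtain ⟨B, hB, hglue⟩ := glue h𝓑 hts hsub
  obtain ⟨U, hU, hBU⟩ := h𝒰.2.2 B hB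
  have hUo : IsOpen U := h𝒰.1.1 U hU
  obtain ⟨Mw, hMw⟩ := hw.1.2
  obtain ⟨Mf, hMf⟩ := hf.2
  obtain ⟨u, hu1, hu2, hu3⟩ := env_of_hcd hcd hB (fun x => max (w x - f x) 0)
    (M := Mw + Mf) (fun x => le_max_right _ _)
    (fun x => max_le (by have := abs_le.1 (hMw x); have := abs_le.1 (hMf x); linarith)
      (by have := abs_le.1 (hMw x); have := abs_le.1 (hMf x); linarith))
  have hagree : ∀ x ∈ B, fUg U (f + u) x = w x := fun x hx => by
    rw [fUg_on (hBU hx)]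
    have h1 : u x = max (w x - f x) 0 := hu3 x hx
    have h2 : max (w x - f x) 0 = w x - f x := max_eq_left (by linarith [hw.2 x])
    simp only [Pi.add_apply]
    rw [h1, h2]; ring
  refine ⟨fUg U (f + u), hglue _ w hwts hagree,
    ⟨U, hU, f + u, uscb_add hf hu1, rfl⟩, fun x => ?_, fUg_sub_f_mem hUo hf hu1⟩
  · calc f x ≤ (f + u) x := by simp only [Pi.add_apply]; linarith [hu2 x]
      _ ≤ fUg U (f + u) x := fUg_ge _ _ _

lemma su_upperSeqDense (h𝓑 : IsPBornology 𝓑) {𝒰 : Set (Set X)}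
    (h𝒰 : 𝒰 ∈ BGammaCovers 𝓑) :
    SU 𝒰 ∈ UpperSeqDenseFam (tauB 𝓑) (USCb X) := by
  refine ⟨su_subset_uscb h𝒰.1.1, fun f hf => ?_⟩
  set e := h𝒰.2.1.natEmbedding with he
  refine ⟨fun j => fUg (e j) f, fun j => ⟨⟨e j, (e j).2, f, hf, rfl⟩, fUg_ge _ _,
    fUg_sub_mem (h𝒰.1.1 _ (e j).2) hf⟩, ?_⟩
  refine tendsto_tauB fun ts hts hsub hfts => ?_
  obtain ⟨B, hB, hglue⟩ := glue h𝓑 hts hsub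
  have hbadfin : {j : ℕ | ¬ B ⊆ (e j : Set X)}.Finite := by
    have hinj : Function.Injective (fun j => (e j : Set X)) :=
      fun a b hab => e.injective (Subtype.ext hab)
    have : {j : ℕ | ¬ B ⊆ (e j : Set X)} =
        (fun j => (e j : Set X)) ⁻¹' {U ∈ 𝒰 | ¬ B ⊆ U} := by
      ext j
      simp only [Set.mem_setOf_eq, Set.mem_preimage, Set.mem_sep_iff]
      exact ⟨fun h => ⟨(e j).2, h⟩, fun h => h.2⟩
    rw [this]
    exact Set.Finite.preimage hinj.injOn (h𝒰.2.2 B hB)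
  obtain ⟨N, hN⟩ := hbadfin.bddAbove
  rw [Filter.eventually_atTop]
  refine ⟨N + 1, fun j hj => ?_⟩
  have hBj : B ⊆ (e j : Set X) := by
    by_contra hc
    have : j ∈ {j : ℕ | ¬ B ⊆ (e j : Set X)} := hc
    have := hN this
    omega
  exact hglue _ f hfts fun x hx => fUg_on (hBj hx) f

lemma bgamma_diff_univ (h𝓑 : IsPBornology 𝓑) {𝒰 : Set (Set X)}
    (h𝒰 : 𝒰 ∈ BGammaCovers 𝓑) : 𝒰 \ {Set.univ} ∈ BGammaCovers 𝓑 := by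
  obtain ⟨⟨hop, hcov⟩, hinf, hγ⟩ := h𝒰
  have hexist : ∀ x : X, ∃ U ∈ 𝒰 \ {Set.univ}, x ∈ U := by
    intro x
    have hbad : ({U ∈ 𝒰 | ¬ ({x} : Set X) ⊆ U} ∪ {Set.univ}).Finite :=
      (hγ _ (bor_singleton h𝓑 x)).union (Set.finite_singleton _)
    obtain ⟨U, hU⟩ := (hinf.diff hbad).nonempty
    rw [Set.mem_diff, Set.mem_union, not_or] at hU
    refine ⟨U, ⟨hU.1, hU.2.2⟩, ?_⟩
    have : ¬ ¬ ({x} : Set X) ⊆ U := fun hc => hU.2.1 ⟨hU.1, hc⟩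
    rw [not_not] at this
    exact this rfl
  refine ⟨⟨fun U hU => hop U hU.1, ?_⟩, hinf.diff (Set.finite_singleton _), fun B hB =>
    (hγ B hB).subset fun U hU => ⟨hU.1.1, hU.2⟩⟩
  rw [Set.eq_univ_iff_forall]
  intro x
  obtain ⟨U, hU1, hU2⟩ := hexist x
  exact ⟨U, hU1, hU2⟩

/-- From a dense set of `fUg`-functions, the corresponding sets form a `𝓑`-ω-cover. -/
lemma su_selection (h𝓑 : IsPBornology 𝓑) (𝒱 : ℕ → Set (Set X))
    (hnu : ∀ n, Set.univ ∉ 𝒱 n) (hop : ∀ n, ∀ U ∈ 𝒱 n, IsOpen U)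
    (s : ℕ → X → ℝ) (hs : ∀ n, s n ∈ SU (𝒱 n))
    (hdense : Set.range s ∈ DFam (tauB 𝓑) (USCb X)) :
    ∃ Usel : ℕ → Set X, (∀ n, Usel n ∈ 𝒱 n) ∧ Set.range Usel ∈ BOmegaCovers 𝓑 := by
  choose Un hUn gn hgn hsg using hs
  have hωB : ∀ B ∈ 𝓑, ∃ n, B ⊆ Un n := by
    intro B hB
    have h0cl := hdense.2 (uscb_zero (X := X))
    obtain ⟨a, ⟨n, rfl⟩, ha⟩ := closure_tauB_nbhd h0cl hB (by norm_num : (0:ℝ) < 1/2)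
    refine ⟨n, fun x hx => ?_⟩
    by_contra hc
    obtain ⟨M, hM⟩ := (hgn n).2
    have h1 : 1 ≤ s n x := by
      rw [hsg n]
      exact fUg_off_ge_one hc hM
    have h2 := ha x hx
    simp only [Pi.zero_apply, zero_sub, abs_neg] at h2
    have : s n x < 1/2 := lt_of_abs_lt h2
    linarith
  refine ⟨Un, hUn, ⟨⟨?_, ?_⟩, ?_, ?_⟩⟩
  · rintro U ⟨n, rfl⟩
    exact hop n _ (hUn n)
  · rw [Set.eq_univ_iff_forall]
    intro x
    obtain ⟨n, hn⟩ := hωB {x} (bor_singleton h𝓑 x)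
    exact ⟨Un n, ⟨n, rfl⟩, hn rfl⟩
  · rintro ⟨n, hn⟩
    exact hnu n (hn ▸ hUn n)
  · intro B hB
    obtain ⟨n, hn⟩ := hωB B hB
    exact ⟨Un n, ⟨n, rfl⟩, hn⟩

lemma a_to_b [T2Space X] (h𝓑 : IsPBornology 𝓑)
    (hcd : ∀ f ∈ USCb X, ∃ G : Set (X → ℝ), G ⊆ Cb X ∧ G.Countable ∧
      f ∈ @closure _ (tauB 𝓑) G) (phi : Bool)
    (ha : S1 (cond phi (UpperDenseFam (tauB 𝓑) (USCb X))
      (UpperSeqDenseFam (tauB 𝓑) (USCb X))) (DFam (tauB 𝓑) (USCb X))) :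
    SeparableIn (tauB 𝓑) (USCb X) ∧
      S1 (cond phi (BOmegaCovers 𝓑) (BGammaCovers 𝓑)) (BOmegaCovers 𝓑) := by
  refine ⟨sep_of_S1dense h𝓑 hcd phi ha, ?_⟩
  intro 𝒰 hu
  cases phi with
  | true =>
    obtain ⟨s, hs, hdense⟩ := ha (fun n => SU (𝒰 n)) fun n => su_upperDense h𝓑 hcd (hu n)
    obtain ⟨Usel, hUsel, hcov⟩ := su_selection h𝓑 𝒰 (fun n => (hu n).2.1)
      (fun n => (hu n).1.1) s hs hdense
    exact ⟨Usel, hUsel, hcov⟩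
  | false =>
    have hu' : ∀ n, 𝒰 n \ {Set.univ} ∈ BGammaCovers 𝓑 := fun n =>
      bgamma_diff_univ h𝓑 (hu n)
    obtain ⟨s, hs, hdense⟩ := ha (fun n => SU (𝒰 n \ {Set.univ}))
      fun n => su_upperSeqDense h𝓑 (hu' n)
    obtain ⟨Usel, hUsel, hcov⟩ := su_selection h𝓑 (fun n => 𝒰 n \ {Set.univ})
      (fun n hc => hc.2 rfl) (fun n U hU => (hu n).1.1 U hU.1) s hs hdense
    exact ⟨Usel, fun n => (hUsel n).1, hcov⟩

end AB
end St5
namespace St5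
open Classical
section CB
variable {X : Type*} [TopologicalSpace X] {𝓑 : Set (Set X)}

lemma pi_zero_le {f : X → ℝ} (h : ∀ x, 0 ≤ f x) : (0 : X → ℝ) ≤ f := fun x => h x

lemma sub_zero_mem {f : X → ℝ} (hf : f ∈ USCb X) : f - 0 ∈ USCb X := by
  rw [sub_zero]; exact hf

/-- Recovering a `𝓑`-ω-cover from selections of `chi`-functions accumulating at `0`. -/
lemma chi_selection (h𝓑 : IsPBornology 𝓑) (𝒱 : ℕ → Set (Set X))
    (hnu : ∀ n, Set.univ ∉ 𝒱 n) (hop : ∀ n, ∀ U ∈ 𝒱 n, IsOpen U)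
    (f : ℕ → X → ℝ) (hf : ∀ n, f n ∈ chi '' 𝒱 n)
    (hcl : (0 : X → ℝ) ∈ @closure _ (tauB 𝓑) (Set.range f)) :
    ∃ Usel : ℕ → Set X, (∀ n, Usel n ∈ 𝒱 n) ∧ Set.range Usel ∈ BOmegaCovers 𝓑 := by
  choose Un hUn hUchi using hf
  have hωB : ∀ B ∈ 𝓑, ∃ n, B ⊆ Un n := by
    intro B hB
    obtain ⟨a, ⟨n, rfl⟩, ha⟩ := closure_tauB_nbhd hcl hB one_pos
    refine ⟨n, chi_lt_one_subset fun x hx => ?_⟩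
    have h1 := ha x hx
    rw [← hUchi n] at h1
    simp only [Pi.zero_apply, zero_sub, abs_neg] at h1
    rwa [abs_of_nonneg (chi_nonneg (Un n) x)] at h1
  refine ⟨Un, hUn, ⟨⟨?_, ?_⟩, ?_, ?_⟩⟩
  · rintro U ⟨n, rfl⟩
    exact hop n _ (hUn n)
  · rw [Set.eq_univ_iff_forall]
    intro x
    obtain ⟨n, hn⟩ := hωB {x} (bor_singleton h𝓑 x)
    exact ⟨Un n, ⟨n, rfl⟩, hn rfl⟩
  · rintro ⟨n, hn⟩
    exact hnu n (hn ▸ hUn n)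
  · intro B hB
    obtain ⟨n, hn⟩ := hωB B hB
    exact ⟨Un n, ⟨n, rfl⟩, hn⟩

lemma chi_image_omegaFam (h𝓑 : IsPBornology 𝓑) {𝒰 : Set (Set X)}
    (h𝒰 : 𝒰 ∈ BOmegaCovers 𝓑) :
    chi '' 𝒰 ∈ OmegaFam 𝓑 (0 : X → ℝ) (USCb X) := by
  have hsubH : chi '' 𝒰 ⊆ USCb X := by
    rintro _ ⟨U, hU, rfl⟩
    exact chi_mem (h𝒰.1.1 U hU)
  refine ⟨hsubH, ⟨?_, ?_⟩, ?_⟩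
  · rintro ⟨U, hU, hchi⟩
    exact chi_ne_zero (fun h => h𝒰.2.1 (h ▸ hU)) hchi
  · refine mem_closure_tauB fun ts hts hsub hwts => ?_
    obtain ⟨B, hB, hglue⟩ := glue h𝓑 hts hsub
    obtain ⟨U, hU, hBU⟩ := h𝒰.2.2 B hB
    refine ⟨chi U, hglue (chi U) 0 hwts fun x hx => ?_, ⟨U, hU, rfl⟩⟩
    rw [chi_on (hBU hx)]
    rfl
  · rintro _ ⟨U, hU, rfl⟩
    exact ⟨pi_zero_le (chi_nonneg U), sub_zero_mem (chi_mem (h𝒰.1.1 U hU))⟩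

lemma chi_image_gammaFam (h𝓑 : IsPBornology 𝓑) {𝒰 : Set (Set X)}
    (h𝒰 : 𝒰 ∈ BGammaCovers 𝓑) (hnu : Set.univ ∉ 𝒰) :
    chi '' 𝒰 ∈ GammaFam 𝓑 (0 : X → ℝ) (USCb X) := by
  have hsubH : chi '' 𝒰 ⊆ USCb X := by
    rintro _ ⟨U, hU, rfl⟩
    exact chi_mem (h𝒰.1.1 U hU)
  refine ⟨hsubH, ⟨h𝒰.2.1.image chi_inj.injOn, fun ε hε B hB => ?_⟩, ?_⟩
  · refine ((h𝒰.2.2 B hB).image chi).subset ?_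
    rintro _ ⟨⟨U, hU, rfl⟩, x, hx, hεx⟩
    refine ⟨U, ⟨hU, fun hBU => ?_⟩, rfl⟩
    have h0 : chi U x = 0 := chi_on (hBU hx)
    simp only [Pi.zero_apply, sub_zero, h0, abs_zero] at hεx
    linarith
  · rintro _ ⟨U, hU, rfl⟩
    exact ⟨pi_zero_le (chi_nonneg U), sub_zero_mem (chi_mem (h𝒰.1.1 U hU))⟩

lemma c_to_b (h𝓑 : IsPBornology 𝓑) (phi : Bool)
    (hS1 : S1 (cond phi (OmegaFam 𝓑 (0 : X → ℝ) (USCb X)) (GammaFam 𝓑 (0 : X → ℝ) (USCb X)))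
      (OmegaFam 𝓑 (0 : X → ℝ) (USCb X))) :
    S1 (cond phi (BOmegaCovers 𝓑) (BGammaCovers 𝓑)) (BOmegaCovers 𝓑) := by
  intro 𝒰 hu
  cases phi with
  | true =>
    obtain ⟨f, hf, homega⟩ := hS1 (fun n => chi '' 𝒰 n)
      (fun n => chi_image_omegaFam h𝓑 (hu n))
    obtain ⟨Usel, hUsel, hcov⟩ := chi_selection h𝓑 𝒰 (fun n => (hu n).2.1)
      (fun n => (hu n).1.1) f hf homega.2.1.2
    exact ⟨Usel, hUsel, hcov⟩
  | false =>
    have hu' : ∀ n, 𝒰 n \ {Set.univ} ∈ BGammaCovers 𝓑 := fun n =>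
      bgamma_diff_univ h𝓑 (hu n)
    obtain ⟨f, hf, homega⟩ := hS1 (fun n => chi '' (𝒰 n \ {Set.univ}))
      (fun n => chi_image_gammaFam h𝓑 (hu' n) (fun hc => hc.2 rfl))
    obtain ⟨Usel, hUsel, hcov⟩ := chi_selection h𝓑 (fun n => 𝒰 n \ {Set.univ})
      (fun n hc => hc.2 rfl) (fun n U hU => (hu n).1.1 U hU.1) f hf homega.2.1.2
    exact ⟨Usel, fun n => (hUsel n).1, hcov⟩

end CB
end St5
namespace St5
open Classical
section BSTAR
variable {X : Type*} [TopologicalSpace X] {𝓑 : Set (Set X)}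

/-- Threshold sequence `1/(q+1)`. -/
noncomputable def thr (q : ℕ) : ℝ := 1 / ((q : ℝ) + 1)

lemma thr_pos (q : ℕ) : 0 < thr q := by
  unfold thr
  positivity

lemma thr_lt_of_lt {k m : ℕ} (h : k < m) : thr m < thr k := by
  unfold thr
  have hk : (0:ℝ) < (k : ℝ) + 1 := by positivity
  have : (k : ℝ) + 1 < (m : ℝ) + 1 := by
    have : (k : ℝ) < m := Nat.cast_lt.mpr h
    linarith
  exact one_div_lt_one_div_of_lt hk this

lemma thr_le_of_le {k m : ℕ} (h : k ≤ m) : thr m ≤ thr k := by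
  rcases eq_or_lt_of_le h with rfl | h
  · exact le_refl _
  · exact le_of_lt (thr_lt_of_lt h)

lemma exists_thr_lt {δ : ℝ} (hδ : 0 < δ) : ∃ k, thr k < δ := by
  obtain ⟨n, hn⟩ := exists_nat_one_div_lt hδ
  exact ⟨n, hn⟩

lemma exists_infinite_fiber_nat {α : Type*} (g : ℕ → α) (hfin : (Set.range g).Finite) :
    ∃ a, {j | g j = a}.Infinite := by
  by_contra hc
  push_neg at hc
  have hsub : (Set.univ : Set ℕ) ⊆ ⋃ a ∈ Set.range g, {j | g j = a} := fun j _ =>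
    Set.mem_biUnion (Set.mem_range_self j) rfl
  exact Set.infinite_univ ((hfin.biUnion fun a _ => hc a).subset hsub)

lemma infinite_exists_ge {N : Set ℕ} (hN : N.Infinite) (k : ℕ) : ∃ n ∈ N, k ≤ n := by
  by_contra hc
  push_neg at hc
  exact hN ((Set.finite_Iio k).subset fun n hn => hc n hn)

/-- Packaging the conclusion `Set.range σ ∈ Ω_{0,𝓑}(USC*)`. -/
lemma omegaFam_range (h𝓑 : IsPBornology 𝓑) (hfin : ∀ B ∈ 𝓑, B.Finite) {σ : ℕ → X → ℝ}
    (hH : ∀ q, σ q ∈ USCb X) (hp : ∀ q x, 0 ≤ σ q x) (hn : ∀ q, σ q ≠ 0)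
    (hcl : ∀ B ∈ 𝓑, ∀ δ : ℝ, 0 < δ → ∃ q, ∀ x ∈ B, σ q x < δ) :
    Set.range σ ∈ OmegaFam 𝓑 (0 : X → ℝ) (USCb X) := by
  refine ⟨?_, ⟨?_, ?_⟩, ?_⟩
  · rintro _ ⟨q, rfl⟩; exact hH q
  · rintro ⟨q, hq⟩; exact hn q hq
  · refine mem_closure_tauB_fin h𝓑 hfin fun B hB δ hδ => ?_
    obtain ⟨q, hq⟩ := hcl B hB δ hδ
    refine ⟨σ q, ⟨q, rfl⟩, fun x hx => ?_⟩
    simp only [Pi.zero_apply, zero_sub, abs_neg]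
    rw [abs_of_nonneg (hp q x)]
    exact hq x hx
  · rintro _ ⟨q, rfl⟩
    exact ⟨pi_zero_le (hp q), sub_zero_mem (hH q)⟩

/-- Easy case: infinitely many indices carry globally small nonzero elements. -/
lemma assemble_small (h𝓑 : IsPBornology 𝓑) (hfin : ∀ B ∈ 𝓑, B.Finite) {S : ℕ → Set (X → ℝ)}
    (hS : ∀ q, S q ⊆ USCb X) (hpos : ∀ q, ∀ f ∈ S q, ∀ x, (0:ℝ) ≤ f x)
    (hne0 : ∀ q, ∀ f ∈ S q, f ≠ 0) (hNonempty : ∀ q, (S q).Nonempty)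
    (hNS : {q | ∃ w ∈ S q, ∀ x, w x < thr q}.Infinite) :
    ∃ σ : ℕ → X → ℝ, (∀ q, σ q ∈ S q) ∧ Set.range σ ∈ OmegaFam 𝓑 (0 : X → ℝ) (USCb X) := by
  have hchoice : ∀ q, ∃ w ∈ S q, (q ∈ {q | ∃ w ∈ S q, ∀ x, w x < thr q} → ∀ x, w x < thr q) := by
    intro q
    by_cases hq : q ∈ {q | ∃ w ∈ S q, ∀ x, w x < thr q}
    · obtain ⟨w, hw1, hw2⟩ := hq
      exact ⟨w, hw1, fun _ => hw2⟩
    · obtain ⟨w, hw⟩ := hNonempty q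
      exact ⟨w, hw, fun h => absurd h hq⟩
  choose σ hσ1 hσ2 using hchoice
  refine ⟨σ, hσ1, omegaFam_range h𝓑 hfin (fun q => hS q (hσ1 q)) (fun q => hpos q _ (hσ1 q))
    (fun q => hne0 q _ (hσ1 q)) fun B hB δ hδ => ?_⟩
  obtain ⟨k, hk⟩ := exists_thr_lt hδ
  obtain ⟨q, hqNS, hqk⟩ := infinite_exists_ge hNS k
  refine ⟨q, fun x _ => lt_of_lt_of_le (lt_of_lt_of_le (hσ2 q hqNS x) (thr_le_of_le hqk))
    (le_of_lt hk)⟩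

/-- Hard case: a `B*`-argument turning an output ω-cover into accumulation at `0`. -/
lemma assemble_bstar (h𝓑 : IsPBornology 𝓑) (hfin : ∀ B ∈ 𝓑, B.Finite) {S : ℕ → Set (X → ℝ)}
    (hS : ∀ q, S q ⊆ USCb X) (hpos : ∀ q, ∀ f ∈ S q, ∀ x, (0:ℝ) ≤ f x)
    (hne0 : ∀ q, ∀ f ∈ S q, f ≠ 0) (hNonempty : ∀ q, (S q).Nonempty)
    (n₁ : ℕ) (f : ℕ → X → ℝ) (hfS : ∀ n, f n ∈ S (n + n₁ + 1))
    (U : ℕ → Set X) (hU : ∀ n, ∀ x ∈ U n, f n x < thr (n + n₁ + 1))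
    (y : ℕ → X) (hy : ∀ n, ¬ f n (y n) < thr (n + n₁ + 1))
    (hcov : Set.range U ∈ BOmegaCovers 𝓑) :
    ∃ σ : ℕ → X → ℝ, (∀ q, σ q ∈ S q) ∧ Set.range σ ∈ OmegaFam 𝓑 (0 : X → ℝ) (USCb X) := by
  have hσex : ∀ q, ∃ w ∈ S q, ∀ n, q = n + n₁ + 1 → w = f n := by
    intro q
    by_cases hq : n₁ + 1 ≤ q
    · have hqe : q - n₁ - 1 + n₁ + 1 = q := by omega
      have h := hfS (q - n₁ - 1)
      rw [hqe] at h
      refine ⟨f (q - n₁ - 1), h, fun n hn => ?_⟩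
      have : q - n₁ - 1 = n := by omega
      rw [this]
    · obtain ⟨w, hw⟩ := hNonempty q
      exact ⟨w, hw, fun n hn => absurd hn (by omega)⟩
  choose σ hσ1 hσ2 using hσex
  refine ⟨σ, hσ1, omegaFam_range h𝓑 hfin (fun q => hS q (hσ1 q)) (fun q => hpos q _ (hσ1 q))
    (fun q => hne0 q _ (hσ1 q)) fun B hB δ hδ => ?_⟩
  obtain ⟨k, hk⟩ := exists_thr_lt hδ
  set Bstar := B ∪ (y '' {n | n + n₁ + 1 ≤ k}) with hBstar
  have hBstar𝓑 : Bstar ∈ 𝓑 := by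
    refine bor_union h𝓑 hB (bor_finite h𝓑 (Set.Finite.image y ?_))
    exact (Set.finite_Iic k).subset fun n hn => by
      simp only [Set.mem_setOf_eq] at hn
      simp only [Set.mem_Iic]
      omega
  obtain ⟨V, ⟨m, rfl⟩, hBV⟩ := hcov.2.2 Bstar hBstar𝓑
  have hmk : k < m + n₁ + 1 := by
    by_contra hc
    push_neg at hc
    exact hy m (hU m (y m) (hBV (Set.mem_union_right _ ⟨m, by simpa using hc, rfl⟩)))
  refine ⟨m + n₁ + 1, fun x hx => ?_⟩
  have h1 : σ (m + n₁ + 1) = f m := hσ2 (m + n₁ + 1) m rfl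
  rw [h1]
  calc f m x < thr (m + n₁ + 1) := hU m x (hBV (Set.mem_union_left _ hx))
    _ < thr k := thr_lt_of_lt hmk
    _ < δ := hk

/-- Hard case with ω-covers built from sublevel sets (`Φ = Ω` side). -/
lemma hard_omega (h𝓑 : IsPBornology 𝓑) (hfin : ∀ B ∈ 𝓑, B.Finite) {S : ℕ → Set (X → ℝ)}
    (hS : ∀ q, S q ⊆ USCb X) (hpos : ∀ q, ∀ f ∈ S q, ∀ x, (0:ℝ) ≤ f x)
    (hne0 : ∀ q, ∀ f ∈ S q, f ≠ 0) (hNonempty : ∀ q, (S q).Nonempty)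
    (hrich : ∀ q, ∀ B ∈ 𝓑, ∀ δ : ℝ, 0 < δ → ∃ e ∈ S q, ∀ x ∈ B, e x < δ)
    (n₁ : ℕ) (hbig : ∀ q, n₁ + 1 ≤ q → ∀ w ∈ S q, ∃ x, ¬ w x < thr q)
    (hS1 : S1 (BOmegaCovers 𝓑) (BOmegaCovers 𝓑)) :
    ∃ σ : ℕ → X → ℝ, (∀ q, σ q ∈ S q) ∧ Set.range σ ∈ OmegaFam 𝓑 (0 : X → ℝ) (USCb X) := by
  set 𝒰 : ℕ → Set (Set X) :=
    fun n => (fun e : X → ℝ => {x | e x < thr (n + n₁ + 1)}) '' S (n + n₁ + 1) with h𝒰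
  have hcover : ∀ n, 𝒰 n ∈ BOmegaCovers 𝓑 := by
    intro n
    refine ⟨⟨?_, ?_⟩, ?_, ?_⟩
    · rintro _ ⟨e, he, rfl⟩
      exact (hS _ he).1 _
    · rw [Set.eq_univ_iff_forall]
      intro x
      obtain ⟨e, he, hex⟩ := hrich (n + n₁ + 1) {x} (bor_singleton h𝓑 x) _ (thr_pos _)
      exact ⟨_, ⟨e, he, rfl⟩, hex x rfl⟩
    · rintro ⟨e, he, hu⟩
      obtain ⟨x, hx⟩ := hbig (n + n₁ + 1) (by omega) e he
      have hu' : {x | e x < thr (n + n₁ + 1)} = Set.univ := hu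
      apply hx
      have : x ∈ {x | e x < thr (n + n₁ + 1)} := by rw [hu']; trivial
      exact this
    · intro B hB
      obtain ⟨e, he, hex⟩ := hrich (n + n₁ + 1) B hB _ (thr_pos _)
      exact ⟨_, ⟨e, he, rfl⟩, fun x hx => hex x hx⟩
  obtain ⟨V, hV, hVcov⟩ := hS1 𝒰 hcover
  have hVmem : ∀ n, ∃ e ∈ S (n + n₁ + 1), V n = {x | e x < thr (n + n₁ + 1)} := by
    intro n
    obtain ⟨e, he, hVe⟩ := hV n
    exact ⟨e, he, hVe.symm⟩
  choose e he1 he2 using hVmem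
  have hy : ∀ n, ∃ x, ¬ e n x < thr (n + n₁ + 1) := fun n =>
    hbig (n + n₁ + 1) (by omega) (e n) (he1 n)
  choose y hy2 using hy
  exact assemble_bstar h𝓑 hfin hS hpos hne0 hNonempty n₁ e he1 V
    (fun n x hx => by rw [he2 n] at hx; exact hx) y hy2 hVcov

end BSTAR
end St5
namespace St5
open Classical
section HARDG
variable {X : Type*} [TopologicalSpace X] {𝓑 : Set (Set X)}

lemma abs_zero_sub_lt {a δ : ℝ} (h0 : 0 ≤ a) (h : |a - 0| < δ) : a < δ := by
  rwa [sub_zero, abs_of_nonneg h0] at h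

/-- Hard case with γ-covers built from sublevel sets of a γ-family (`Φ = Γ`, (b)⇒(c)). -/
lemma hard_gamma_fam (h𝓑 : IsPBornology 𝓑) (hfin : ∀ B ∈ 𝓑, B.Finite)
    {F : ℕ → Set (X → ℝ)} (hF : ∀ q, F q ∈ GammaFam 𝓑 (0 : X → ℝ) (USCb X)) (n₁ : ℕ)
    (hbig : ∀ q, n₁ + 1 ≤ q → ∀ w ∈ F q \ {0}, ∃ x, ¬ w x < thr q)
    (hS1 : S1 (BGammaCovers 𝓑) (BOmegaCovers 𝓑)) :
    ∃ σ : ℕ → X → ℝ, (∀ q, σ q ∈ F q \ {0}) ∧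
      Set.range σ ∈ OmegaFam 𝓑 (0 : X → ℝ) (USCb X) := by
  set S : ℕ → Set (X → ℝ) := fun q => F q \ {0} with hSdef
  have hSsub : ∀ q, S q ⊆ USCb X := fun q f hf => (hF q).1 hf.1
  have hpos : ∀ q, ∀ f ∈ S q, ∀ x, (0:ℝ) ≤ f x := fun q f hf x => ((hF q).2.2 f hf.1).1 x
  have hne0 : ∀ q, ∀ f ∈ S q, f ≠ 0 := fun q f hf => hf.2
  have hSinf : ∀ q, (S q).Infinite := fun q => (hF q).2.1.1.diff (Set.finite_singleton _)
  have hrich : ∀ q, ∀ B ∈ 𝓑, ∀ δ : ℝ, 0 < δ → ∃ f ∈ S q, ∀ x ∈ B, f x < δ := by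
    intro q B hB δ hδ
    have hbad := (hF q).2.1.2 δ hδ B hB
    obtain ⟨f, hf⟩ := ((hSinf q).diff hbad).nonempty
    refine ⟨f, hf.1, fun x hx => ?_⟩
    have hnb : f ∉ {f ∈ F q | ∃ x ∈ B, δ ≤ |f x - (0:X→ℝ) x|} := hf.2
    simp only [Set.mem_sep_iff, not_and, not_exists, not_le] at hnb
    have := hnb hf.1.1 x hx
    simp only [Pi.zero_apply] at this
    exact abs_zero_sub_lt (hpos q f hf.1 x) this
  set lev : ℕ → (X → ℝ) → Set X := fun n f => {x | f x < thr (n + n₁ + 1)} with hlev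
  set 𝒰 : ℕ → Set (Set X) := fun n => lev n '' S (n + n₁ + 1) with h𝒰
  have hnuniv : ∀ n, ∀ V ∈ 𝒰 n, V ≠ Set.univ := by
    rintro n _ ⟨f, hf, rfl⟩ hV
    obtain ⟨x, hx⟩ := hbig (n + n₁ + 1) (by omega) f hf
    apply hx
    have : x ∈ lev n f := by rw [show lev n f = Set.univ from hV]; trivial
    exact this
  have hcover : ∀ n, 𝒰 n ∈ BGammaCovers 𝓑 := by
    intro n
    refine ⟨⟨?_, ?_⟩, ?_, ?_⟩
    · rintro _ ⟨f, hf, rfl⟩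
      exact (hSsub _ hf).1 _
    · rw [Set.eq_univ_iff_forall]
      intro x
      obtain ⟨f, hf, hfx⟩ := hrich (n + n₁ + 1) {x} (bor_singleton h𝓑 x) _ (thr_pos _)
      exact ⟨lev n f, ⟨f, hf, rfl⟩, hfx x rfl⟩
    · -- infinite
      by_contra hc
      rw [Set.not_infinite] at hc
      have hfiber : ∃ V ∈ 𝒰 n, {f ∈ S (n + n₁ + 1) | lev n f = V}.Infinite := by
        by_contra hc2
        push_neg at hc2
        refine (hSinf (n + n₁ + 1)) ((hc.biUnion hc2).subset fun f hf => ?_)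
        exact Set.mem_biUnion ⟨f, hf, rfl⟩ ⟨hf, rfl⟩
      obtain ⟨V, hV𝒰, hVinf⟩ := hfiber
      have hVuniv : V = Set.univ := by
        rw [Set.eq_univ_iff_forall]
        intro x
        have hbad := (hF (n + n₁ + 1)).2.1.2 (thr (n + n₁ + 1)) (thr_pos _) {x}
          (bor_singleton h𝓑 x)
        obtain ⟨f, hf⟩ := (hVinf.diff hbad).nonempty
        have hx : f x < thr (n + n₁ + 1) := by
          have hnb := hf.2
          simp only [Set.mem_sep_iff, not_and, not_exists, not_le] at hnb
          have := hnb hf.1.1.1 x rfl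
          simp only [Pi.zero_apply, sub_zero] at this
          rwa [abs_of_nonneg (hpos _ f hf.1.1 x)] at this
        rw [← hf.1.2]
        exact hx
      exact hnuniv n V hV𝒰 hVuniv
    · intro B hB
      have hbad := (hF (n + n₁ + 1)).2.1.2 (thr (n + n₁ + 1)) (thr_pos _) B hB
      refine (hbad.image (lev n)).subset ?_
      rintro V ⟨⟨f, hfS, rfl⟩, hnB⟩
      rw [Set.not_subset] at hnB
      obtain ⟨x, hxB, hxV⟩ := hnB
      refine ⟨f, ⟨hfS.1, x, hxB, ?_⟩, rfl⟩
      have : ¬ f x < thr (n + n₁ + 1) := hxV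
      simp only [Pi.zero_apply, sub_zero]
      rw [abs_of_nonneg (hpos _ f hfS x)]
      linarith [not_lt.mp this]
  obtain ⟨V, hV, hVcov⟩ := hS1 𝒰 hcover
  have hVmem : ∀ n, ∃ f ∈ S (n + n₁ + 1), V n = lev n f := by
    intro n
    obtain ⟨f, hf, hVf⟩ := hV n
    exact ⟨f, hf, hVf.symm⟩
  choose e he1 he2 using hVmem
  have hy : ∀ n, ∃ x, ¬ e n x < thr (n + n₁ + 1) := fun n =>
    hbig (n + n₁ + 1) (by omega) (e n) (he1 n)
  choose y hy2 using hy
  exact assemble_bstar h𝓑 hfin hSsub hpos hne0 (fun q => (hSinf q).nonempty) n₁ e he1 V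
    (fun n x hx => by rw [he2 n] at hx; exact hx) y hy2 hVcov

/-- Hard case with γ-covers built from converging sequences (`Φ = Γ`, (b)⇒(d)). -/
lemma hard_gamma_seq (h𝓑 : IsPBornology 𝓑) (hfin : ∀ B ∈ 𝓑, B.Finite)
    {S : ℕ → Set (X → ℝ)}
    (hS : ∀ q, S q ⊆ USCb X) (hpos : ∀ q, ∀ f ∈ S q, ∀ x, (0:ℝ) ≤ f x)
    (hne0 : ∀ q, ∀ f ∈ S q, f ≠ 0) (hNonempty : ∀ q, (S q).Nonempty)
    (n₁ : ℕ) (hbig : ∀ q, n₁ + 1 ≤ q → ∀ w ∈ S q, ∃ x, ¬ w x < thr q)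
    (seq : ℕ → ℕ → X → ℝ) (hseqS : ∀ n j, seq n j ∈ S (n + n₁ + 1))
    (hseqsmall : ∀ n, ∀ B ∈ 𝓑, ∀ᶠ j in Filter.atTop, ∀ x ∈ B, seq n j x < thr (n + n₁ + 1))
    (hS1 : S1 (BGammaCovers 𝓑) (BOmegaCovers 𝓑)) :
    ∃ σ : ℕ → X → ℝ, (∀ q, σ q ∈ S q) ∧ Set.range σ ∈ OmegaFam 𝓑 (0 : X → ℝ) (USCb X) := by
  set lev : ℕ → (X → ℝ) → Set X := fun n f => {x | f x < thr (n + n₁ + 1)} with hlev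
  set 𝒰 : ℕ → Set (Set X) := fun n => Set.range (fun j => lev n (seq n j)) with h𝒰
  have hnuniv : ∀ n, ∀ V ∈ 𝒰 n, V ≠ Set.univ := by
    rintro n _ ⟨j, rfl⟩ hV
    obtain ⟨x, hx⟩ := hbig (n + n₁ + 1) (by omega) (seq n j) (hseqS n j)
    apply hx
    have : x ∈ lev n (seq n j) := by rw [show lev n (seq n j) = Set.univ from hV]; trivial
    exact this
  have hcover : ∀ n, 𝒰 n ∈ BGammaCovers 𝓑 := by
    intro n
    refine ⟨⟨?_, ?_⟩, ?_, ?_⟩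
    · rintro _ ⟨j, rfl⟩
      exact (hS _ (hseqS n j)).1 _
    · rw [Set.eq_univ_iff_forall]
      intro x
      obtain ⟨j, hj⟩ := (hseqsmall n {x} (bor_singleton h𝓑 x)).exists
      exact ⟨lev n (seq n j), ⟨j, rfl⟩, hj x rfl⟩
    · -- infinite
      by_contra hc
      rw [Set.not_infinite] at hc
      obtain ⟨V, hVinf⟩ := exists_infinite_fiber_nat (fun j => lev n (seq n j)) hc
      have hV𝒰 : V ∈ 𝒰 n := by
        obtain ⟨j, hj⟩ := hVinf.nonempty
        exact ⟨j, hj⟩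
      have hVuniv : V = Set.univ := by
        rw [Set.eq_univ_iff_forall]
        intro x
        obtain ⟨J, hJ⟩ := Filter.eventually_atTop.mp (hseqsmall n {x} (bor_singleton h𝓑 x))
        obtain ⟨j, hjV, hjJ⟩ := infinite_exists_ge hVinf J
        rw [← hjV]
        exact hJ j hjJ x rfl
      exact hnuniv n V hV𝒰 hVuniv
    · intro B hB
      obtain ⟨J, hJ⟩ := Filter.eventually_atTop.mp (hseqsmall n B hB)
      refine ((Set.finite_Iio J).image (fun j => lev n (seq n j))).subset ?_
      rintro V ⟨⟨j0, hj0⟩, hnB⟩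
      by_cases hj0J : j0 < J
      · exact ⟨j0, hj0J, hj0⟩
      · exfalso
        apply hnB
        rw [← hj0]
        exact fun x hx => hJ j0 (by omega) x hx
  obtain ⟨V, hV, hVcov⟩ := hS1 𝒰 hcover
  have hVmem : ∀ n, ∃ j, V n = lev n (seq n j) := by
    intro n
    obtain ⟨j, hVj⟩ := hV n
    exact ⟨j, hVj.symm⟩
  choose jj hjj using hVmem
  have hy : ∀ n, ∃ x, ¬ seq n (jj n) x < thr (n + n₁ + 1) := fun n =>
    hbig (n + n₁ + 1) (by omega) _ (hseqS n (jj n))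
  choose y hy2 using hy
  exact assemble_bstar h𝓑 hfin hS hpos hne0 hNonempty n₁ (fun n => seq n (jj n))
    (fun n => hseqS n (jj n)) V (fun n x hx => by rw [hjj n] at hx; exact hx) y hy2 hVcov

end HARDG
end St5
namespace St5
open Classical
section BCD
variable {X : Type*} [TopologicalSpace X] {𝓑 : Set (Set X)}

lemma small_of_close0 {a : X → ℝ} {x : X} {δ : ℝ} (hpos : 0 ≤ a x)
    (h : |(0:X→ℝ) x - a x| < δ) : a x < δ := by
  simp only [Pi.zero_apply, zero_sub, abs_neg] at h
  rwa [abs_of_nonneg hpos] at h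

lemma omegaFam_nonempty {F : Set (X → ℝ)} (hF : F ∈ OmegaFam 𝓑 (0 : X → ℝ) (USCb X)) :
    F.Nonempty := by
  rcases Set.eq_empty_or_nonempty F with h | h
  · exfalso
    have h0 := hF.2.1.2
    rw [h] at h0
    letI := tauB 𝓑
    rw [closure_empty] at h0
    exact h0
  · exact h

lemma b_to_c (h𝓑 : IsPBornology 𝓑) (hfin : ∀ B ∈ 𝓑, B.Finite) (phi : Bool)
    (hS1cov : S1 (cond phi (BOmegaCovers 𝓑) (BGammaCovers 𝓑)) (BOmegaCovers 𝓑)) :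
    S1 (cond phi (OmegaFam 𝓑 (0 : X → ℝ) (USCb X)) (GammaFam 𝓑 (0 : X → ℝ) (USCb X)))
      (OmegaFam 𝓑 (0 : X → ℝ) (USCb X)) := by
  cases phi with
  | true =>
    intro F hF
    have hSsub : ∀ q, F q ⊆ USCb X := fun q => (hF q).1
    have hpos : ∀ q, ∀ f ∈ F q, ∀ x, (0:ℝ) ≤ f x := fun q f hf x => ((hF q).2.2 f hf).1 x
    have hne0 : ∀ q, ∀ f ∈ F q, f ≠ 0 := fun q f hf heq => (hF q).2.1.1 (heq ▸ hf)
    have hNonempty : ∀ q, (F q).Nonempty := fun q => omegaFam_nonempty (hF q)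
    have hrich : ∀ q, ∀ B ∈ 𝓑, ∀ δ : ℝ, 0 < δ → ∃ e ∈ F q, ∀ x ∈ B, e x < δ := by
      intro q B hB δ hδ
      obtain ⟨a, haF, ha⟩ := closure_tauB_nbhd (hF q).2.1.2 hB hδ
      exact ⟨a, haF, fun x hx => small_of_close0 (hpos q a haF x) (ha x hx)⟩
    by_cases hNS : {q | ∃ w ∈ F q, ∀ x, w x < thr q}.Infinite
    · exact assemble_small h𝓑 hfin hSsub hpos hne0 hNonempty hNS
    · rw [Set.not_infinite] at hNS
      obtain ⟨n₁, hn₁⟩ := hNS.bddAbove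
      have hbig : ∀ q, n₁ + 1 ≤ q → ∀ w ∈ F q, ∃ x, ¬ w x < thr q := by
        intro q hq w hw
        by_contra hc
        push_neg at hc
        have : q ∈ {q | ∃ w ∈ F q, ∀ x, w x < thr q} := ⟨w, hw, hc⟩
        have := hn₁ this
        omega
      exact hard_omega h𝓑 hfin hSsub hpos hne0 hNonempty hrich n₁ hbig hS1cov
  | false =>
    intro F hF
    set S : ℕ → Set (X → ℝ) := fun q => F q \ {0} with hSdef
    have hSsub : ∀ q, S q ⊆ USCb X := fun q f hf => (hF q).1 hf.1
    have hpos : ∀ q, ∀ f ∈ S q, ∀ x, (0:ℝ) ≤ f x := fun q f hf x => ((hF q).2.2 f hf.1).1 x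
    have hne0 : ∀ q, ∀ f ∈ S q, f ≠ 0 := fun q f hf => hf.2
    have hSinf : ∀ q, (S q).Infinite := fun q => (hF q).2.1.1.diff (Set.finite_singleton _)
    by_cases hNS : {q | ∃ w ∈ S q, ∀ x, w x < thr q}.Infinite
    · obtain ⟨σ, hσ1, hσ2⟩ := assemble_small h𝓑 hfin hSsub hpos hne0
        (fun q => (hSinf q).nonempty) hNS
      exact ⟨σ, fun q => (hσ1 q).1, hσ2⟩
    · rw [Set.not_infinite] at hNS
      obtain ⟨n₁, hn₁⟩ := hNS.bddAbove
      have hbig : ∀ q, n₁ + 1 ≤ q → ∀ w ∈ F q \ {0}, ∃ x, ¬ w x < thr q := by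
        intro q hq w hw
        by_contra hc
        push_neg at hc
        have : q ∈ {q | ∃ w ∈ S q, ∀ x, w x < thr q} := ⟨w, hw, hc⟩
        have := hn₁ this
        omega
      obtain ⟨σ, hσ1, hσ2⟩ := hard_gamma_fam h𝓑 hfin hF n₁ hbig hS1cov
      exact ⟨σ, fun q => (hσ1 q).1, hσ2⟩

lemma rich_upperDense [Nonempty X] [T2Space X] (h𝓑 : IsPBornology 𝓑) {F : Set (X → ℝ)}
    (hF : F ∈ UpperDenseFam (tauB 𝓑) (USCb X)) {B : Set X} (hB : B ∈ 𝓑) {δ : ℝ}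
    (hδ : 0 < δ) :
    ∃ e, (e ∈ F ∧ (0:X→ℝ) ≤ e ∧ e ≠ 0) ∧ ∀ x ∈ B, e x < δ := by
  set x₀ := Classical.arbitrary X with hx₀
  set bump : X → ℝ := fun y => if y = x₀ then δ/2 else 0 with hbump
  have hbmem : bump ∈ USCb X := uscb_point x₀ (le_of_lt (half_pos hδ))
  have hble : (0:X→ℝ) ≤ bump := fun y => by
    by_cases hy : y = x₀ <;> simp [hbump, hy, le_of_lt (half_pos hδ)]
  have h1 := hF.2 (0:X→ℝ) uscb_zero ⟨hbmem, hble⟩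
  obtain ⟨e, ⟨heF, hele, hesub⟩, hee⟩ :=
    closure_tauB_nbhd h1 (bor_union h𝓑 hB (bor_singleton h𝓑 x₀)) (half_pos hδ)
  have hex₀ : 0 < e x₀ := by
    have h5 : |δ/2 - e x₀| < δ/2 := by simpa [hbump] using hee x₀ (Set.mem_union_right _ rfl)
    rw [abs_lt] at h5
    linarith [h5.2]
  refine ⟨e, ⟨heF, hele, fun h0 => by rw [h0] at hex₀; simp at hex₀⟩, fun x hx => ?_⟩
  have h2 := hee x (Set.mem_union_left _ hx)
  have h3 : bump x ≤ δ/2 := by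
    by_cases hx' : x = x₀ <;> simp [hbump, hx', le_of_lt (half_pos hδ)]
  rw [abs_lt] at h2
  linarith [h2.1]

lemma rich_upperSeqDense [Nonempty X] (h𝓑 : IsPBornology 𝓑) {F : Set (X → ℝ)}
    (hF : F ∈ UpperSeqDenseFam (tauB 𝓑) (USCb X)) {B : Set X} (hB : B ∈ 𝓑) {δ : ℝ}
    (hδ : 0 < δ) :
    ∃ e, (e ∈ F ∧ (0:X→ℝ) ≤ e ∧ e ≠ 0) ∧ ∀ x ∈ B, e x < δ := by
  obtain ⟨s, hs1, hs2⟩ := hF.2 (fun _ => δ/2) (uscb_const _)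
  obtain ⟨j, hj⟩ := (tendsto_tauB_nbhd hs2 hB (half_pos hδ)).exists
  have hle : ∀ x, δ/2 ≤ s j x := fun x => (hs1 j).2.1 x
  refine ⟨s j, ⟨(hs1 j).1, fun x => le_trans (le_of_lt (half_pos hδ)) (hle x), fun h0 => ?_⟩,
    fun x hx => ?_⟩
  · have := hle (Classical.arbitrary X)
    rw [h0] at this
    simp only [Pi.zero_apply] at this
    linarith
  · have := hj x hx
    rw [abs_lt] at this
    linarith [this.1]

lemma b_to_d (h𝓑 : IsPBornology 𝓑) (hfin : ∀ B ∈ 𝓑, B.Finite) [Nonempty X] [T2Space X] (phi : Bool)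
    (hS1cov : S1 (cond phi (BOmegaCovers 𝓑) (BGammaCovers 𝓑)) (BOmegaCovers 𝓑)) :
    S1 (cond phi (UpperDenseFam (tauB 𝓑) (USCb X)) (UpperSeqDenseFam (tauB 𝓑) (USCb X)))
      (OmegaFam 𝓑 (0 : X → ℝ) (USCb X)) := by
  cases phi with
  | true =>
    intro F hF
    set S : ℕ → Set (X → ℝ) := fun q => {h | h ∈ F q ∧ (0:X→ℝ) ≤ h ∧ h ≠ 0} with hSdef
    have hSsub : ∀ q, S q ⊆ USCb X := fun q f hf => (hF q).1 hf.1
    have hpos : ∀ q, ∀ f ∈ S q, ∀ x, (0:ℝ) ≤ f x := fun q f hf x => hf.2.1 x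
    have hne0 : ∀ q, ∀ f ∈ S q, f ≠ 0 := fun q f hf => hf.2.2
    have hrich : ∀ q, ∀ B ∈ 𝓑, ∀ δ : ℝ, 0 < δ → ∃ e ∈ S q, ∀ x ∈ B, e x < δ := by
      intro q B hB δ hδ
      obtain ⟨e, he1, he2⟩ := rich_upperDense h𝓑 (hF q) hB hδ
      exact ⟨e, he1, he2⟩
    have hNonempty : ∀ q, (S q).Nonempty := fun q => by
      obtain ⟨e, he, _⟩ := hrich q ∅ (bor_empty h𝓑) 1 one_pos
      exact ⟨e, he⟩
    by_cases hNS : {q | ∃ w ∈ S q, ∀ x, w x < thr q}.Infinite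
    · obtain ⟨σ, hσ1, hσ2⟩ := assemble_small h𝓑 hfin hSsub hpos hne0 hNonempty hNS
      exact ⟨σ, fun q => (hσ1 q).1, hσ2⟩
    · rw [Set.not_infinite] at hNS
      obtain ⟨n₁, hn₁⟩ := hNS.bddAbove
      have hbig : ∀ q, n₁ + 1 ≤ q → ∀ w ∈ S q, ∃ x, ¬ w x < thr q := by
        intro q hq w hw
        by_contra hc
        push_neg at hc
        have : q ∈ {q | ∃ w ∈ S q, ∀ x, w x < thr q} := ⟨w, hw, hc⟩
        have := hn₁ this
        omega
      obtain ⟨σ, hσ1, hσ2⟩ := hard_omega h𝓑 hfin hSsub hpos hne0 hNonempty hrich n₁ hbig hS1cov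
      exact ⟨σ, fun q => (hσ1 q).1, hσ2⟩
  | false =>
    intro F hF
    set S : ℕ → Set (X → ℝ) := fun q => {h | h ∈ F q ∧ (0:X→ℝ) ≤ h ∧ h ≠ 0} with hSdef
    have hSsub : ∀ q, S q ⊆ USCb X := fun q f hf => (hF q).1 hf.1
    have hpos : ∀ q, ∀ f ∈ S q, ∀ x, (0:ℝ) ≤ f x := fun q f hf x => hf.2.1 x
    have hne0 : ∀ q, ∀ f ∈ S q, f ≠ 0 := fun q f hf => hf.2.2
    have hrich : ∀ q, ∀ B ∈ 𝓑, ∀ δ : ℝ, 0 < δ → ∃ e ∈ S q, ∀ x ∈ B, e x < δ := by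
      intro q B hB δ hδ
      obtain ⟨e, he1, he2⟩ := rich_upperSeqDense h𝓑 (hF q) hB hδ
      exact ⟨e, he1, he2⟩
    have hNonempty : ∀ q, (S q).Nonempty := fun q => by
      obtain ⟨e, he, _⟩ := hrich q ∅ (bor_empty h𝓑) 1 one_pos
      exact ⟨e, he⟩
    by_cases hNS : {q | ∃ w ∈ S q, ∀ x, w x < thr q}.Infinite
    · obtain ⟨σ, hσ1, hσ2⟩ := assemble_small h𝓑 hfin hSsub hpos hne0 hNonempty hNS
      exact ⟨σ, fun q => (hσ1 q).1, hσ2⟩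
    · rw [Set.not_infinite] at hNS
      obtain ⟨n₁, hn₁⟩ := hNS.bddAbove
      have hbig : ∀ q, n₁ + 1 ≤ q → ∀ w ∈ S q, ∃ x, ¬ w x < thr q := by
        intro q hq w hw
        by_contra hc
        push_neg at hc
        have : q ∈ {q | ∃ w ∈ S q, ∀ x, w x < thr q} := ⟨w, hw, hc⟩
        have := hn₁ this
        omega
      have hseqex : ∀ n, ∃ s : ℕ → X → ℝ, (∀ j, s j ∈ S (n + n₁ + 1)) ∧
          ∀ B ∈ 𝓑, ∀ᶠ j in Filter.atTop, ∀ x ∈ B, s j x < thr (n + n₁ + 1) := by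
        intro n
        set q := n + n₁ + 1 with hq
        obtain ⟨s, hs1, hs2⟩ := (hF q).2 (fun _ => thr q / 2) (uscb_const _)
        have hle : ∀ j x, thr q / 2 ≤ s j x := fun j x => (hs1 j).2.1 x
        refine ⟨s, fun j => ⟨(hs1 j).1, fun x =>
          le_trans (le_of_lt (half_pos (thr_pos q))) (hle j x), fun h0 => ?_⟩, fun B hB => ?_⟩
        · have := hle j (Classical.arbitrary X)
          rw [h0] at this
          simp only [Pi.zero_apply] at this
          linarith [thr_pos q]
        · refine (tendsto_tauB_nbhd hs2 hB (half_pos (thr_pos q))).mono fun j hj x hx => ?_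
          have := hj x hx
          rw [abs_lt] at this
          linarith [this.1]
      choose seq hseq1 hseq2 using hseqex
      obtain ⟨σ, hσ1, hσ2⟩ := hard_gamma_seq h𝓑 hfin hSsub hpos hne0 hNonempty n₁ hbig
        seq hseq1 hseq2 hS1cov
      exact ⟨σ, fun q => (hσ1 q).1, hσ2⟩

end BCD
end St5

open St5 in
/-- For `Φ ∈ {Ω, Γ}` (coded by the Boolean `phi`: `true ↦ Ω`, `false ↦ Γ`),
assuming `C*(X)` is countably dense in `⟨USC*(X), τ_𝓑⟩`, the four conditions (a)–(d) of
Theorem `PhiD1` are equivalent. -/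
theorem statement5 {X : Type*} [TopologicalSpace X] [T2Space X] [Infinite X]
    (𝓑 : Set (Set X)) (h𝓑 : IsPBornology 𝓑) (phi : Bool)
    (hcd : ∀ f ∈ USCb X, ∃ G : Set (X → ℝ), G ⊆ Cb X ∧ G.Countable ∧
      f ∈ @closure _ (tauB 𝓑) G) :
    List.TFAE
      [ -- (a)
        S1 (cond phi (UpperDenseFam (tauB 𝓑) (USCb X)) (UpperSeqDenseFam (tauB 𝓑) (USCb X)))
          (DFam (tauB 𝓑) (USCb X)),
        -- (b)
        SeparableIn (tauB 𝓑) (USCb X) ∧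
          S1 (cond phi (BOmegaCovers 𝓑) (BGammaCovers 𝓑)) (BOmegaCovers 𝓑),
        -- (c)
        SeparableIn (tauB 𝓑) (USCb X) ∧
          S1 (cond phi (OmegaFam 𝓑 (0 : X → ℝ) (USCb X)) (GammaFam 𝓑 (0 : X → ℝ) (USCb X)))
            (OmegaFam 𝓑 (0 : X → ℝ) (USCb X)),
        -- (d)
        SeparableIn (tauB 𝓑) (USCb X) ∧
          S1 (cond phi (UpperDenseFam (tauB 𝓑) (USCb X)) (UpperSeqDenseFam (tauB 𝓑) (USCb X)))
            (OmegaFam 𝓑 (0 : X → ℝ) (USCb X)) ] := by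
  tfae_have 1 → 2
  | ha => a_to_b h𝓑 hcd phi ha
  tfae_have 2 → 3
  | ⟨hsep, hS1⟩ => ⟨hsep, b_to_c h𝓑 (fun B hB => fin_of_sep hcd hsep hB) phi hS1⟩
  tfae_have 3 → 2
  | ⟨hsep, hS1⟩ => ⟨hsep, c_to_b h𝓑 phi hS1⟩
  tfae_have 2 → 4
  | ⟨hsep, hS1⟩ => ⟨hsep, b_to_d h𝓑 (fun B hB => fin_of_sep hcd hsep hB) phi hS1⟩
  tfae_have 4 → 1
  | ⟨hsep, hS1⟩ => d_to_a h𝓑 phi hsep hS1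
  tfae_finish
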